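/- arXiv:2211.13581 — 6 statements merged into one kernel-verified Lean document; each statement's English description precedes it below -/
import Mathlib

section
/- Let a_0,…,a_n be distinct real numbers and Ω(x) = ∏_{i=0}^{n}(x−a_i). For any k ≥ 0 and any x not equal to any a_i, (1/k!) Ω^{(k)}(x) = Ω(x) · Z_k(−S_1(x), −S_2(x), …, −S_k(x)), where S_r(x) = Σ_{i=0}^{n} 1/(a_i − x)^r and Z_k is the cycle index of S_k. -/
open Finset

/-- `cycleCount i σ` is the number of cycles of length `i` in the cycle
decomposition of the permutation `σ` (fixed points count as 1-cycles). -/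
def cycleCount {n : ℕ} (i : ℕ) (σ : Equiv.Perm (Fin n)) : ℕ :=
  if i = 1 then (Finset.univ.filter fun a => σ a = a).card
  else Multiset.count i σ.cycleType

/-- The cycle index of the symmetric group `S_n`:
`Z_n(x_1,…,x_n) = (1/n!) ∑_{σ ∈ S_n} ∏_{i=1}^n x_i ^ c_i(σ)`. -/
noncomputable def cycleIndex (n : ℕ) (x : ℕ → ℝ) : ℝ :=
  (n.factorial : ℝ)⁻¹ *
    ∑ σ : Equiv.Perm (Fin n), ∏ i ∈ Finset.Icc 1 n, x i ^ cycleCount i σ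


set_option linter.unusedSectionVars false
set_option maxHeartbeats 1000000

section Aux
open Polynomial Equiv Equiv.Perm

theorem deriv_finprod {R : Type*} [CommRing R] {ι : Type*} [DecidableEq ι]
    (t : Finset ι) (f : ι → R[X]) :
    derivative (∏ i ∈ t, f i) = ∑ j ∈ t, (∏ i ∈ t.erase j, f i) * derivative (f j) := by
  induction t using Finset.induction_on with
  | empty => simp
  | @insert a s ha ih =>
    rw [Finset.prod_insert ha, derivative_mul, ih, Finset.sum_insert ha,
      Finset.erase_insert ha, Finset.mul_sum]
    congr 1
    · ring
    · refine Finset.sum_congr rfl fun j hj => ?_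
      rw [Finset.erase_insert_of_ne (fun h => ha (by rw [h]; exact hj)), Finset.prod_insert
        (fun h => ha (Finset.mem_of_mem_erase h))]
      ring

theorem reindex_powerset {M : Type*} [AddCommMonoid M] {ι : Type*} [DecidableEq ι]
    (u : Finset ι) (k : ℕ) (F : Finset ι → M) :
    ∑ s ∈ u.powersetCard k, ∑ j ∈ u \ s, F (insert j s)
      = ∑ s ∈ u.powersetCard (k + 1), (k + 1) • F s := by
  have : ∀ s ∈ u.powersetCard (k+1), (k+1) • F s = ∑ j ∈ s, F s := by
    intro s hs
    rw [Finset.sum_const, (Finset.mem_powersetCard.1 hs).2]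
  rw [Finset.sum_congr rfl this, Finset.sum_sigma', Finset.sum_sigma']
  refine Finset.sum_nbij' (fun p => ⟨insert p.2 p.1, p.2⟩) (fun p => ⟨p.1.erase p.2, p.2⟩)
    ?_ ?_ ?_ ?_ ?_
  · rintro ⟨s, j⟩ hp
    simp only [Finset.mem_sigma, Finset.mem_powersetCard, Finset.mem_sdiff] at hp ⊢
    obtain ⟨⟨hsu, hsk⟩, hju, hjs⟩ := hp
    exact ⟨⟨Finset.insert_subset hju hsu, by rw [Finset.card_insert_of_notMem hjs, hsk]⟩,
      Finset.mem_insert_self _ _⟩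
  · rintro ⟨s, j⟩ hp
    simp only [Finset.mem_sigma, Finset.mem_powersetCard, Finset.mem_sdiff] at hp ⊢
    obtain ⟨⟨hsu, hsk⟩, hjs⟩ := hp
    refine ⟨⟨(Finset.erase_subset _ _).trans hsu, ?_⟩, hsu hjs, Finset.notMem_erase _ _⟩
    rw [Finset.card_erase_of_mem hjs, hsk]; rfl
  · rintro ⟨s, j⟩ hp
    simp only [Finset.mem_sigma, Finset.mem_sdiff] at hp
    simp [Finset.erase_insert hp.2.2]
  · rintro ⟨s, j⟩ hp
    simp only [Finset.mem_sigma] at hp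
    simp [Finset.insert_erase hp.2]
  · rintro ⟨s, j⟩ hp; rfl

theorem iter_deriv_prod {R : Type*} [CommRing R] {ι : Type*} [DecidableEq ι]
    (u : Finset ι) (a : ι → R) (k : ℕ) :
    derivative^[k] (∏ i ∈ u, (X - C (a i)))
      = k.factorial • ∑ s ∈ u.powersetCard k, ∏ i ∈ u \ s, (X - C (a i)) := by
  induction k with
  | zero => simp
  | succ k ih =>
    rw [Function.iterate_succ_apply', ih, map_nsmul, map_sum]
    have : ∀ s ∈ u.powersetCard k, derivative (∏ i ∈ u \ s, (X - C (a i)))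
        = ∑ j ∈ u \ s, ∏ i ∈ u \ insert j s, (X - C (a i)) := by
      intro s _
      rw [deriv_finprod]
      refine Finset.sum_congr rfl fun j hj => ?_
      rw [derivative_sub, derivative_X, derivative_C, sub_zero, mul_one,
        ← Finset.sdiff_insert]
    rw [Finset.sum_congr rfl this]
    have h2 := reindex_powerset u k (fun s => ∏ i ∈ u \ s, (X - C (a i)))
    rw [h2, ← Finset.smul_sum, smul_smul, Nat.factorial_succ, mul_comm]


theorem iteratedDeriv_eval (P : Polynomial ℝ) (k : ℕ) (x : ℝ) :
    iteratedDeriv k (fun t => P.eval t) x = (derivative^[k] P).eval x := by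
  induction k generalizing P x with
  | zero => simp
  | succ k ih =>
    rw [iteratedDeriv_succ', Function.iterate_succ_apply]
    rw [show (deriv fun t => P.eval t) = fun t => (derivative P).eval t from
      funext fun t => Polynomial.deriv P]
    exact ih _ _


variable {α : Type*} [Fintype α] [DecidableEq α]

noncomputable instance qdec {β : Type*} (σ : Perm β) :
    DecidableEq (Quotient (SameCycle.setoid σ)) := Classical.decEq _

noncomputable instance qfin {β : Type*} [Fintype β] (σ : Perm β) :
    Fintype (Quotient (SameCycle.setoid σ)) :=
  @Quotient.fintype β _ (SameCycle.setoid σ) (fun _ _ => Classical.dec _)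

/-- The orbit of `j` under `σ` as an element of the quotient. -/
abbrev orbMk (σ : Perm α) (j : α) : Quotient (SameCycle.setoid σ) :=
  Quotient.mk (SameCycle.setoid σ) j

theorem orbMk_out {α : Type*} (σ : Perm α) (q : Quotient (SameCycle.setoid σ)) :
    orbMk σ q.out = q := Quotient.out_eq q

theorem sameCycle_out {α : Type*} (σ : Perm α) (x : α) : σ.SameCycle (orbMk σ x).out x :=
  @Quotient.mk_out _ (SameCycle.setoid σ) x

theorem orbMk_eq_iff {σ : Perm α} {m j : α} : orbMk σ m = orbMk σ j ↔ σ.SameCycle m j :=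
  ⟨fun h => Quotient.exact h, fun h => Quotient.sound h⟩

theorem orbMk_apply (σ : Perm α) (j : α) : orbMk σ (σ j) = orbMk σ j :=
  Quotient.sound ⟨-1, by simp⟩

/-- size of an orbit -/
noncomputable def osize (σ : Perm α) (q : Quotient (SameCycle.setoid σ)) : ℕ :=
  (univ.filter fun j => orbMk σ j = q).card

theorem out_mem_fiber (σ : Perm α) (q : Quotient (SameCycle.setoid σ)) :
    q.out ∈ univ.filter fun j => orbMk σ j = q := by
  simp [orbMk, Quotient.out_eq]

theorem one_le_osize (σ : Perm α) (q : Quotient (SameCycle.setoid σ)) : 1 ≤ osize σ q :=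
  Finset.card_pos.2 ⟨q.out, out_mem_fiber σ q⟩

theorem osize_le (σ : Perm α) (q : Quotient (SameCycle.setoid σ)) :
    osize σ q ≤ Fintype.card α :=
  le_trans (Finset.card_le_card (Finset.filter_subset _ _)) (le_of_eq (Finset.card_univ))

theorem osize_eq_one_iff (σ : Perm α) (j : α) : osize σ (orbMk σ j) = 1 ↔ σ j = j := by
  constructor
  · intro h
    obtain ⟨b, hb⟩ := Finset.card_eq_one.1 h
    have hj : j ∈ univ.filter fun m => orbMk σ m = orbMk σ j := by simp
    have hsj : σ j ∈ univ.filter fun m => orbMk σ m = orbMk σ j := by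
      simp [orbMk_apply]
    rw [hb, Finset.mem_singleton] at hj hsj
    rw [hsj, hj]
  · intro h
    have : (univ.filter fun m => orbMk σ m = orbMk σ j) = {j} := by
      ext m
      simp only [Finset.mem_filter, Finset.mem_univ, true_and, Finset.mem_singleton,
        orbMk_eq_iff]
      constructor
      · rintro ⟨z, hz⟩
        exact (σ ^ z).injective (hz.trans (zpow_apply_eq_self_of_apply_eq_self h z).symm)
      · rintro rfl; exact SameCycle.refl _ _
    rw [osize, this, Finset.card_singleton]

theorem osize_eq_card_support_cycleOf (σ : Perm α) (j : α) (hj : j ∈ σ.support) :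
    osize σ (orbMk σ j) = (σ.cycleOf j).support.card := by
  rw [osize]
  congr 1
  ext m
  simp only [Finset.mem_filter, Finset.mem_univ, true_and, orbMk_eq_iff,
    mem_support_cycleOf_iff]
  exact ⟨fun h => ⟨h.symm, hj⟩, fun h => h.1.symm⟩




theorem cycleCount_eq_card {k : ℕ} (σ : Perm (Fin k)) {i : ℕ} (hi : 1 ≤ i) :
    cycleCount i σ = (univ.filter fun q : Quotient (SameCycle.setoid σ) => osize σ q = i).card := by
  rcases eq_or_ne i 1 with rfl | hne
  · rw [cycleCount, if_pos rfl]
    refine Finset.card_nbij (orbMk σ) ?_ ?_ ?_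
    · intro a ha
      simp only [Finset.coe_filter, Set.mem_setOf_eq, Finset.mem_filter, Finset.mem_univ, true_and] at ha ⊢
      exact (osize_eq_one_iff σ a).2 ha
    · intro a ha b hb hab
      simp only [Finset.coe_filter, Set.mem_setOf_eq, Finset.mem_univ, true_and] at ha hb
      obtain ⟨z, hz⟩ := orbMk_eq_iff.1 hab
      rw [zpow_apply_eq_self_of_apply_eq_self ha z] at hz
      exact hz
    · intro q hq
      simp only [Finset.coe_filter, Set.mem_setOf_eq, Finset.mem_univ, true_and] at hq ⊢
      have h1 : osize σ (orbMk σ q.out) = 1 := by rw [orbMk_out]; exact hq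
      exact ⟨q.out, (osize_eq_one_iff σ q.out).1 h1, orbMk_out σ q⟩
  · have h2 : 2 ≤ i := by omega
    rw [cycleCount, if_neg hne, cycleType_def, Multiset.count_map]
    have hcard : Multiset.card (Multiset.filter (fun c => i = (Finset.card ∘ Equiv.Perm.support) c)
        σ.cycleFactorsFinset.1) = (σ.cycleFactorsFinset.filter
          fun c => i = c.support.card).card := rfl
    rw [hcard]
    refine (Finset.card_nbij (fun q => σ.cycleOf q.out) ?_ ?_ ?_).symm
    · intro q hq
      simp only [Finset.coe_filter, Set.mem_setOf_eq, Finset.mem_filter, Finset.mem_univ, true_and] at hq ⊢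
      have hsupp : q.out ∈ σ.support := by
        rw [mem_support]
        intro hfix
        have := (osize_eq_one_iff σ q.out).2 hfix
        rw [orbMk_out] at this
        omega
      refine ⟨cycleOf_mem_cycleFactorsFinset_iff.2 hsupp, ?_⟩
      rw [← osize_eq_card_support_cycleOf σ q.out hsupp, orbMk_out, hq]
    · intro q hq q' hq' hqq'
      simp only [Finset.coe_filter, Set.mem_setOf_eq, Finset.mem_univ, true_and] at hq hq'
      have hsupp' : q'.out ∈ σ.support := by
        rw [mem_support]
        intro hfix
        have := (osize_eq_one_iff σ q'.out).2 hfix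
        rw [orbMk_out] at this
        omega
      change σ.cycleOf q.out = σ.cycleOf q'.out at hqq'
      have hmem : q'.out ∈ (σ.cycleOf q.out).support := by
        rw [hqq']
        exact mem_support_cycleOf_iff.2 ⟨SameCycle.refl _ _, hsupp'⟩
      have hsc : σ.SameCycle q.out q'.out := (mem_support_cycleOf_iff.1 hmem).1
      calc q = orbMk σ q.out := (orbMk_out σ q).symm
        _ = orbMk σ q'.out := Quotient.sound hsc
        _ = q' := orbMk_out σ q'
    · intro c hc
      simp only [Finset.coe_filter, Set.mem_setOf_eq, Finset.mem_univ, true_and] at hc ⊢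
      obtain ⟨hcf, hci⟩ := hc
      have hcyc := mem_cycleFactorsFinset_iff.1 hcf
      have hpos : 0 < c.support.card := by omega
      obtain ⟨x, hx⟩ := Finset.card_pos.1 hpos
      have hxσ : x ∈ σ.support := by
        rw [mem_support, ← hcyc.2 x hx]
        exact mem_support.1 hx
      have hceq : c = σ.cycleOf x := cycle_is_cycleOf hx hcf
      refine ⟨orbMk σ x, ?_, ?_⟩
      · show osize σ (orbMk σ x) = i
        rw [osize_eq_card_support_cycleOf σ x hxσ, ← hceq, hci]
      · show σ.cycleOf (orbMk σ x).out = c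
        rw [(sameCycle_out σ x).cycleOf_eq, hceq]

theorem comp_eq_const {α I : Type*} {σ : Perm α} {f : α → I} (hf : f ∘ σ = f) :
    ∀ (z : ℤ) (m : α), f ((σ ^ z) m) = f m := by
  have h1 : ∀ m, f (σ m) = f m := fun m => congrFun hf m
  intro z
  induction z using Int.induction_on with
  | zero => intro m; simp
  | succ n ih =>
    intro m
    rw [zpow_add_one, Perm.mul_apply, ih (σ m), h1]
  | pred n ih =>
    intro m
    rw [zpow_sub_one, Perm.mul_apply, ih (σ⁻¹ m)]
    have := h1 (σ⁻¹ m)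
    rw [show σ (σ⁻¹ m) = m from σ.apply_symm_apply m] at this
    exact this.symm

theorem sameCycle_apply_const {α I : Type*} {σ : Perm α} {f : α → I} (hf : f ∘ σ = f)
    {m j : α} (h : σ.SameCycle m j) : f m = f j := by
  obtain ⟨z, hz⟩ := h
  rw [← hz, comp_eq_const hf]

theorem sum_orbit_functions {α : Type*} [Fintype α] [DecidableEq α] (σ : Perm α)
    {I : Type*} [Fintype I] [DecidableEq I] (y : I → ℝ) :
    ∑ g : Quotient (SameCycle.setoid σ) → I, ∏ j : α, y (g (orbMk σ j))
      = ∑ f ∈ univ.filter (fun f : α → I => f ∘ σ = f), ∏ j : α, y (f j) := by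
  refine Finset.sum_nbij' (fun g => g ∘ (orbMk σ)) (fun f q => f q.out) ?_ ?_ ?_ ?_ ?_
  · intro g _
    simp only [Finset.mem_filter, Finset.mem_univ, true_and]
    funext j
    exact congrArg g (orbMk_apply σ j)
  · intro f _; exact Finset.mem_univ _
  · intro g _
    funext q
    show g (orbMk σ q.out) = g q
    rw [orbMk_out]
  · intro f hf
    simp only [Finset.mem_filter, Finset.mem_univ, true_and] at hf
    funext j
    exact sameCycle_apply_const hf (sameCycle_out σ j)
  · intro g _; rfl

theorem prod_pow_cycleCount {k : ℕ} (σ : Perm (Fin k)) {I : Type*} [Fintype I] [DecidableEq I]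
    (y : I → ℝ) :
    ∏ i ∈ Finset.Icc 1 k, (∑ t : I, y t ^ i) ^ cycleCount i σ
      = ∑ f ∈ univ.filter (fun f : Fin k → I => f ∘ σ = f), ∏ j, y (f j) := by
  have h1 : ∀ i ∈ Finset.Icc 1 k, (∑ t : I, y t ^ i) ^ cycleCount i σ
      = ∏ q ∈ univ.filter (fun q : Quotient (SameCycle.setoid σ) => osize σ q = i),
          (∑ t : I, y t ^ osize σ q) := by
    intro i hi
    rw [cycleCount_eq_card σ (Finset.mem_Icc.1 hi).1, ← Finset.prod_const]
    exact Finset.prod_congr rfl fun q hq => by rw [(Finset.mem_filter.1 hq).2]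
  rw [Finset.prod_congr rfl h1,
    Finset.prod_fiberwise_of_maps_to (fun q _ => Finset.mem_Icc.2
      ⟨one_le_osize σ q, le_trans (osize_le σ q) (le_of_eq (Fintype.card_fin k))⟩)
      (fun q => ∑ t : I, y t ^ osize σ q)]
  have h2 : ∀ q : Quotient (SameCycle.setoid σ), (∑ t : I, y t ^ osize σ q)
      = ∑ t : I, y t ^ osize σ q := fun _ => rfl
  rw [show (∏ q : Quotient (SameCycle.setoid σ), ∑ t : I, y t ^ osize σ q)
      = ∑ g ∈ Fintype.piFinset (fun _ : Quotient (SameCycle.setoid σ) => (univ : Finset I)),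
        ∏ q, y (g q) ^ osize σ q from Finset.prod_univ_sum _ _,
    Fintype.piFinset_univ, ← sum_orbit_functions σ y]
  refine Finset.sum_congr rfl fun g _ => ?_
  have h3 : ∀ q : Quotient (SameCycle.setoid σ), y (g q) ^ osize σ q
      = ∏ j ∈ univ.filter (fun j : Fin k => orbMk σ j = q), y (g (orbMk σ j)) := by
    intro q
    rw [osize, ← Finset.prod_const]
    exact (Finset.prod_congr rfl fun j hj => by rw [(Finset.mem_filter.1 hj).2]).symm
  rw [Finset.prod_congr rfl (fun q _ => h3 q),
    Finset.prod_fiberwise_of_maps_to (fun j _ => Finset.mem_univ (orbMk σ j))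
      (fun j => y (g (orbMk σ j)))]

theorem sign_filter_sum {α I : Type*} [Fintype α] [DecidableEq α] [DecidableEq I] (f : α → I) :
    ∑ σ ∈ univ.filter (fun σ : Perm α => f ∘ σ = f), ((Perm.sign σ : ℤ) : ℝ)
      = if Function.Injective f then 1 else 0 := by
  by_cases hinj : Function.Injective f
  · rw [if_pos hinj]
    have hone : univ.filter (fun σ : Perm α => f ∘ σ = f) = {1} := by
      ext σ
      simp only [Finset.mem_filter, Finset.mem_univ, true_and, Finset.mem_singleton]
      constructor
      · intro h
        exact Equiv.ext fun j => hinj (congrFun h j)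
      · rintro rfl
        rfl
    rw [hone, Finset.sum_singleton]
    simp
  · rw [if_neg hinj]
    obtain ⟨a, b, hab, hne⟩ := Function.not_injective_iff.1 hinj
    have hswap : f ∘ (Equiv.swap a b : Perm α) = f := by
      funext m
      rcases eq_or_ne m a with rfl | hma
      · simp [Equiv.swap_apply_left, hab]
      rcases eq_or_ne m b with rfl | hmb
      · simp [Equiv.swap_apply_right, hab]
      · simp [Equiv.swap_apply_of_ne_of_ne hma hmb]
    refine Finset.sum_involution (fun σ _ => Equiv.swap a b * σ) ?_ ?_ ?_ ?_
    · intro σ _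
      rw [map_mul, Perm.sign_swap hne]
      push_cast
      ring
    · intro σ _ _ h
      have h1 : Equiv.swap a b = 1 := mul_right_cancel (h.trans (one_mul σ).symm)
      have := congrArg (fun e : Perm α => e a) h1
      simp only [Equiv.swap_apply_left, Perm.one_apply] at this
      exact hne (this.symm)
    · intro σ hσ
      simp only [Finset.mem_filter, Finset.mem_univ, true_and] at hσ ⊢
      funext m
      show f ((Equiv.swap a b) (σ m)) = f m
      rw [show f ((Equiv.swap a b) (σ m)) = (f ∘ (Equiv.swap a b)) (σ m) from rfl, hswap]
      exact congrFun hσ m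
    · intro σ _
      show Equiv.swap a b * (Equiv.swap a b * σ) = σ
      rw [← mul_assoc, Equiv.swap_mul_self, one_mul]

theorem sum_injective_eq {k : ℕ} {I : Type*} [Fintype I] [DecidableEq I] (y : I → ℝ) :
    ∑ f ∈ univ.filter (fun f : Fin k → I => Function.Injective f), ∏ j, y (f j)
      = (k.factorial : ℝ) * ∑ s ∈ (univ : Finset I).powersetCard k, ∏ i ∈ s, y i := by
  rw [← Finset.sum_fiberwise_of_maps_to (g := fun f : Fin k → I => Finset.image f univ)
    (t := (univ : Finset I).powersetCard k) ?hmap (fun f => ∏ j, y (f j))]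
  case hmap =>
    intro f hf
    simp only [Finset.mem_filter, Finset.mem_univ, true_and] at hf
    rw [Finset.mem_powersetCard]
    exact ⟨Finset.subset_univ _, by rw [Finset.card_image_of_injective _ hf, Finset.card_univ,
      Fintype.card_fin]⟩
  rw [Finset.mul_sum]
  refine Finset.sum_congr rfl fun s hs => ?_
  have hsk : s.card = k := (Finset.mem_powersetCard.1 hs).2
  have hterm : ∀ f ∈ (univ.filter (fun f : Fin k → I => Function.Injective f)).filter
      (fun f => Finset.image f univ = s), ∏ j, y (f j) = ∏ i ∈ s, y i := by
    intro f hf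
    simp only [Finset.mem_filter, Finset.mem_univ, true_and] at hf
    rw [← hf.2, Finset.prod_image fun m _ m' _ h => hf.1 h]
  rw [Finset.sum_congr rfl hterm, Finset.sum_const, nsmul_eq_mul]
  congr 1
  rw [Finset.filter_filter]
  rw [← Fintype.card_subtype]
  norm_cast
  have hcard : Fintype.card {i : I // i ∈ s} = k := by
    rw [Fintype.card_coe, hsk]
  have e : {f : Fin k → I // Function.Injective f ∧ Finset.image f univ = s}
      ≃ (Fin k ≃ {i : I // i ∈ s}) := by
    refine
      { toFun := fun f => Equiv.ofBijective
          (fun j => (⟨f.1 j, by have h := Finset.mem_image_of_mem f.1 (Finset.mem_univ j); rw [f.2.2] at h; exact h⟩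
            : {i : I // i ∈ s})) ?_
        invFun := fun e => ⟨fun j => (e j : I), fun m m' h => e.injective (Subtype.ext h), ?_⟩
        left_inv := fun f => Subtype.ext (funext fun j => rfl)
        right_inv := fun e => Equiv.ext fun j => Subtype.ext rfl }
    · rw [Fintype.bijective_iff_injective_and_card]
      refine ⟨fun m m' h => f.2.1 (congrArg Subtype.val h), by rw [hcard, Fintype.card_fin]⟩
    · ext i
      simp only [Finset.mem_image, Finset.mem_univ, true_and]
      constructor
      · rintro ⟨j, rfl⟩
        exact (e j).2
      · intro hi
        exact ⟨e.symm ⟨i, hi⟩, by rw [Equiv.apply_symm_apply]⟩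
  rw [Fintype.card_congr e,
    Fintype.card_equiv (Fintype.equivOfCardEq (by rw [hcard, Fintype.card_fin])),
    Fintype.card_fin]

theorem multiset_weighted_sum (m : Multiset ℕ) (t : Finset ℕ) (ht : ∀ x ∈ m, x ∈ t) :
    ∑ i ∈ t, (i + 1) * Multiset.count i m = m.sum + Multiset.card m := by
  induction m using Multiset.induction_on with
  | empty => simp
  | cons a s ih =>
    have ha := ht a (Multiset.mem_cons_self a s)
    have hs : ∀ x ∈ s, x ∈ t := fun x hx => ht x (Multiset.mem_cons_of_mem hx)
    simp only [Multiset.count_cons, Nat.mul_add, Finset.sum_add_distrib, ih hs,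
      Multiset.sum_cons, Multiset.card_cons, mul_ite, mul_one, mul_zero]
    rw [Finset.sum_ite_eq' t a (fun i => i + 1), if_pos ha]
    ring

theorem prod_sign_pow {k : ℕ} (σ : Perm (Fin k)) :
    ∏ i ∈ Finset.Icc 1 k, ((-1 : ℝ) ^ (i + 1)) ^ cycleCount i σ = ((Perm.sign σ : ℤ) : ℝ) := by
  rcases Nat.eq_zero_or_pos k with rfl | hk
  · have : σ = 1 := Subsingleton.elim σ 1
    simp [this]
  · simp_rw [← pow_mul]
    rw [Finset.prod_pow_eq_pow_sum]
    have h1mem : 1 ∈ Finset.Icc 1 k := Finset.mem_Icc.2 ⟨le_refl 1, hk⟩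
    have herase : (Finset.Icc 1 k).erase 1 = Finset.Icc 2 k := by
      ext i
      simp only [Finset.mem_erase, Finset.mem_Icc]
      omega
    rw [← Finset.add_sum_erase _ _ h1mem, herase]
    have hcc : ∀ i ∈ Finset.Icc 2 k, (i + 1) * cycleCount i σ
        = (i + 1) * Multiset.count i σ.cycleType := by
      intro i hi
      have : i ≠ 1 := by have := (Finset.mem_Icc.1 hi).1; omega
      rw [cycleCount, if_neg this]
    rw [Finset.sum_congr rfl hcc,
      multiset_weighted_sum σ.cycleType (Finset.Icc 2 k) ?ht]
    case ht =>
      intro x hx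
      refine Finset.mem_Icc.2 ⟨Equiv.Perm.two_le_of_mem_cycleType hx, ?_⟩
      calc x ≤ σ.cycleType.sum := Multiset.single_le_sum (fun y _ => Nat.zero_le y) x hx
        _ = σ.support.card := σ.sum_cycleType
        _ ≤ k := le_trans (Finset.card_le_univ _) (le_of_eq (by simp))
    rw [pow_add, show (1 + 1) * cycleCount 1 σ = 2 * cycleCount 1 σ from by ring,
      pow_mul, neg_one_sq, one_pow, one_mul, Equiv.Perm.sign_of_cycleType]
    push_cast
    simp



end Aux

open Polynomial Equiv Equiv.Perm

/-- For distinct nodes `a_0,…,a_n`, `Ω(x) = ∏ (x - a_i)`, `k ≥ 0` and `x ≠ a_i`: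
`(1/k!) Ω^{(k)}(x) = Ω(x) · Z_k(-S_1(x),…,-S_k(x))` with
`S_r(x) = ∑_i (a_i - x)^{-r}`. -/
theorem iteratedDeriv_prod_cycleIndex (n : ℕ) (a : Fin (n + 1) → ℝ)
    (ha : Function.Injective a) (k : ℕ) (x : ℝ) (hx : ∀ i, x ≠ a i) :
    (k.factorial : ℝ)⁻¹ * iteratedDeriv k (fun t => ∏ i, (t - a i)) x =
      (∏ i, (x - a i)) *
        cycleIndex k (fun r => -∑ i, ((a i - x) ^ r)⁻¹) := by
  classical
  set y : Fin (n + 1) → ℝ := fun i => (x - a i)⁻¹ with hy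
  have hxa : ∀ i, x - a i ≠ 0 := fun i => sub_ne_zero.2 (hx i)
  have hfac : (k.factorial : ℝ) ≠ 0 := Nat.cast_ne_zero.2 (Nat.factorial_ne_zero k)
  -- LHS
  have hfun : (fun t : ℝ => ∏ i, (t - a i))
      = fun t => Polynomial.eval t (∏ i, (X - C (a i))) := by
    funext t
    rw [Polynomial.eval_prod]
    simp
  have hL : iteratedDeriv k (fun t => ∏ i, (t - a i)) x
      = (k.factorial : ℝ) * ∑ s ∈ (univ : Finset (Fin (n+1))).powersetCard k,
          ∏ i ∈ univ \ s, (x - a i) := by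
    rw [hfun, iteratedDeriv_eval, iter_deriv_prod, nsmul_eq_mul, Polynomial.eval_mul,
      Polynomial.eval_natCast, Polynomial.eval_finset_sum]
    congr 1
    refine Finset.sum_congr rfl fun s _ => ?_
    rw [Polynomial.eval_prod]
    exact Finset.prod_congr rfl fun i _ => by simp
  have hprod : ∀ s ∈ (univ : Finset (Fin (n+1))).powersetCard k,
      ∏ i ∈ univ \ s, (x - a i) = (∏ i, (x - a i)) * ∏ i ∈ s, y i := by
    intro s _
    rw [← Finset.prod_sdiff (Finset.subset_univ s), mul_assoc, ← Finset.prod_mul_distrib]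
    have h1 : ∏ i ∈ s, (x - a i) * y i = 1 :=
      Finset.prod_eq_one fun i _ => mul_inv_cancel₀ (hxa i)
    rw [h1, mul_one]
  -- RHS
  have hS : ∀ i ∈ Finset.Icc 1 k, (-∑ t, ((a t - x) ^ i)⁻¹)
      = (-1 : ℝ) ^ (i + 1) * ∑ t, y t ^ i := by
    intro i _
    have ht : ∀ t, ((a t - x) ^ i)⁻¹ = (-1 : ℝ) ^ i * y t ^ i := by
      intro t
      rw [show a t - x = -(x - a t) from by ring, neg_pow, mul_inv, hy]
      congr 1
      · rw [← inv_pow]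
        norm_num
      · rw [← inv_pow]
    simp_rw [ht]
    rw [← Finset.mul_sum, pow_succ]
    ring
  rw [cycleIndex]
  have hsum : (∑ σ : Perm (Fin k), ∏ i ∈ Finset.Icc 1 k,
        (-∑ t, ((a t - x) ^ i)⁻¹) ^ cycleCount i σ)
      = (k.factorial : ℝ) * ∑ s ∈ (univ : Finset (Fin (n+1))).powersetCard k, ∏ i ∈ s, y i := by
    have h2 : ∀ σ : Perm (Fin k), ∏ i ∈ Finset.Icc 1 k,
        (-∑ t, ((a t - x) ^ i)⁻¹) ^ cycleCount i σ
        = ((Perm.sign σ : ℤ) : ℝ) * ∑ f ∈ univ.filter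
            (fun f : Fin k → Fin (n+1) => f ∘ σ = f), ∏ j, y (f j) := by
      intro σ
      rw [Finset.prod_congr rfl fun i hi => by rw [hS i hi]]
      simp_rw [mul_pow]
      rw [Finset.prod_mul_distrib, prod_sign_pow, prod_pow_cycleCount]
    rw [Finset.sum_congr rfl fun σ _ => h2 σ]
    have hswap : (∑ σ : Perm (Fin k), ((Perm.sign σ : ℤ) : ℝ) * ∑ f ∈ univ.filter
          (fun f : Fin k → Fin (n+1) => f ∘ σ = f), ∏ j, y (f j))
        = ∑ f : Fin k → Fin (n+1), (∏ j, y (f j)) * ∑ σ ∈ univ.filter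
            (fun σ : Perm (Fin k) => f ∘ σ = f), ((Perm.sign σ : ℤ) : ℝ) := by
      simp_rw [Finset.sum_filter, Finset.mul_sum, mul_ite, mul_zero]
      rw [Finset.sum_comm]
      exact Finset.sum_congr rfl fun f _ => Finset.sum_congr rfl fun σ _ => by
        by_cases h : f ∘ σ = f <;> simp [h, mul_comm]
    rw [hswap]
    simp_rw [sign_filter_sum, mul_ite, mul_one, mul_zero]
    rw [← Finset.sum_filter, sum_injective_eq]
  rw [hsum, hL]
  rw [Finset.sum_congr rfl hprod, ← Finset.mul_sum]
  field_simp
end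

section
/- Let a_0,…,a_n be distinct real numbers and Ω(x) = ∏_{j=0}^{n}(x−a_j). For any index i and any k ≥ 1, (1/k!) Ω^{(k)}(a_i) = Ω'(a_i) · Z_{k−1}(−S_{1,i}(a_i), …, −S_{k−1,i}(a_i)), where S_{r,i}(x) = Σ_{j≠i} 1/(a_j − x)^r and Z_{k−1} is the cycle index of S_{k−1}. -/
open Finset

set_option linter.unusedSectionVars false

section Aux

/-- functions fixed by a permutation are constant on cycles -/
lemma apply_eq_of_sameCycle {α ι : Type*} {σ : Equiv.Perm α} {f : α → ι}
    (h : f ∘ σ = f) {x y : α} (hxy : σ.SameCycle x y) : f x = f y := by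
  have hn : ∀ (n : ℕ) (z : α), f ((σ ^ n) z) = f z := by
    intro n
    induction n with
    | zero => simp
    | succ n ih =>
      intro z
      rw [pow_succ', Equiv.Perm.mul_apply]
      exact (congrFun h _).trans (ih z)
  obtain ⟨i, rfl⟩ := hxy
  cases i with
  | ofNat n => rw [Int.ofNat_eq_coe, zpow_natCast, hn]
  | negSucc n =>
    have := hn (n + 1) ((σ ^ Int.negSucc n) x)
    rw [zpow_negSucc] at this ⊢
    rw [← this]
    congr 1
    exact (Equiv.apply_symm_apply _ _).symm

def scSetoid {m : ℕ} (σ : Equiv.Perm (Fin m)) : Setoid (Fin m) :=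
  ⟨σ.SameCycle, ⟨Equiv.Perm.SameCycle.refl σ, fun h => h.symm, fun h h' => h.trans h'⟩⟩

instance scDec {m : ℕ} (σ : Equiv.Perm (Fin m)) : DecidableRel (scSetoid σ).r :=
  fun x y => (inferInstance : Decidable (σ.SameCycle x y))

instance {m : ℕ} (σ : Equiv.Perm (Fin m)) : Fintype (Quotient (scSetoid σ)) :=
  @Quotient.fintype _ _ (scSetoid σ) (scDec σ)

instance {m : ℕ} (σ : Equiv.Perm (Fin m)) : DecidableEq (Quotient (scSetoid σ)) :=
  @Quotient.decidableEq _ (scSetoid σ) (scDec σ)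

end Aux

section C2

variable {m : ℕ} {ι : Type*} [Fintype ι] [DecidableEq ι]

abbrev qmk {m : ℕ} (σ : Equiv.Perm (Fin m)) (x : Fin m) : Quotient (scSetoid σ) :=
  Quotient.mk (scSetoid σ) x

lemma qmk_eq_iff {σ : Equiv.Perm (Fin m)} {x y : Fin m} :
    qmk σ x = qmk σ y ↔ σ.SameCycle x y :=
  ⟨Quotient.exact, fun h => Quotient.sound (show (scSetoid σ).r x y from h)⟩

/-- the equivalence class of `q` as a finset -/
def cls {m : ℕ} (σ : Equiv.Perm (Fin m)) (q : Quotient (scSetoid σ)) : Finset (Fin m) :=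
  univ.filter (fun x => qmk σ x = q)

lemma mem_cls {σ : Equiv.Perm (Fin m)} {q : Quotient (scSetoid σ)} {x : Fin m} :
    x ∈ cls σ q ↔ qmk σ x = q := by simp [cls]

lemma out_mem_cls {σ : Equiv.Perm (Fin m)} (q : Quotient (scSetoid σ)) :
    q.out ∈ cls σ q := by
  rw [mem_cls]
  exact Quotient.out_eq q

lemma sameCycle_of_fixed {σ : Equiv.Perm (Fin m)} {x y : Fin m}
    (hx : σ x = x) (h : σ.SameCycle x y) : y = x := by
  obtain ⟨i, rfl⟩ := h
  by_contra hne
  have hxs : x ∈ (σ ^ i).support := by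
    rw [Equiv.Perm.mem_support]
    intro hc
    exact hne hc
  have := Equiv.Perm.support_zpow_le σ i hxs
  rw [Equiv.Perm.mem_support] at this
  exact this hx

lemma cls_fixed {σ : Equiv.Perm (Fin m)} {x : Fin m} (hx : σ x = x) :
    cls σ (qmk σ x) = {x} := by
  ext y
  rw [mem_cls, mem_singleton, qmk_eq_iff]
  constructor
  · intro h; exact sameCycle_of_fixed hx h.symm
  · rintro rfl; exact Equiv.Perm.SameCycle.refl σ y

lemma cls_not_fixed {σ : Equiv.Perm (Fin m)} {x : Fin m} (hx : σ x ≠ x) :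
    cls σ (qmk σ x) = (σ.cycleOf x).support := by
  ext y
  rw [mem_cls, qmk_eq_iff, Equiv.Perm.mem_support_cycleOf_iff]
  constructor
  · intro h; exact ⟨h.symm, Equiv.Perm.mem_support.mpr hx⟩
  · intro h; exact h.1.symm

end C2

section C2b

variable {m : ℕ}

lemma card_cls_one_iff {σ : Equiv.Perm (Fin m)} (q : Quotient (scSetoid σ)) :
    (cls σ q).card = 1 ↔ σ q.out = q.out := by
  constructor
  · intro h
    by_contra hne
    have h2 : σ q.out ∈ cls σ q := by
      rw [mem_cls]
      conv_rhs => rw [← Quotient.out_eq q]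
      exact qmk_eq_iff.mpr
        ((Equiv.Perm.sameCycle_apply_left).mpr (Equiv.Perm.SameCycle.refl σ q.out))
    have h1 : 1 < (cls σ q).card :=
      Finset.one_lt_card.mpr ⟨_, h2, _, out_mem_cls q, hne⟩
    omega
  · intro h
    have hout : qmk σ q.out = q := Quotient.out_eq q
    have h1 := cls_fixed h
    rw [hout] at h1
    rw [h1, card_singleton]

lemma count_cls {σ : Equiv.Perm (Fin m)} {i : ℕ} (hi : 1 ≤ i) :
    (univ.filter fun q : Quotient (scSetoid σ) => (cls σ q).card = i).card
      = cycleCount i σ := by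
  rcases eq_or_ne i 1 with rfl | hne
  · rw [cycleCount, if_pos rfl]
    refine Finset.card_bij' (fun q _ => q.out) (fun x _ => qmk σ x) ?_ ?_ ?_ ?_
    · intro q hq
      simp only [mem_filter, mem_univ, true_and] at hq ⊢
      exact (card_cls_one_iff q).mp hq
    · intro x hx
      simp only [mem_filter, mem_univ, true_and] at hx ⊢
      rw [cls_fixed hx, card_singleton]
    · intro q _
      exact Quotient.out_eq q
    · intro x hx
      simp only [mem_filter, mem_univ, true_and] at hx
      have : (qmk σ x).out ∈ cls σ (qmk σ x) := out_mem_cls _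
      rw [cls_fixed hx, mem_singleton] at this
      exact this
  · rw [cycleCount, if_neg hne]
    have h2i : 2 ≤ i := by omega
    -- count i cycleType = number of cycle factors with support card i
    have hcount : Multiset.count i σ.cycleType
        = (σ.cycleFactorsFinset.filter fun c => c.support.card = i).card := by
      have hval : (σ.cycleFactorsFinset.filter fun c => c.support.card = i).val
          = σ.cycleFactorsFinset.val.filter
              (fun c => i = (Finset.card ∘ Equiv.Perm.support) c) := by
        rw [Finset.filter_val]
        apply Multiset.filter_congr
        intro c _
        simp [eq_comm]
      rw [Equiv.Perm.cycleType_def, Multiset.count_map, Finset.card_def, hval]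
    rw [hcount]
    refine Finset.card_bij (fun q _ => σ.cycleOf q.out) ?_ ?_ ?_
    · intro q hq
      simp only [mem_filter, mem_univ, true_and] at hq ⊢
      have hfix : σ q.out ≠ q.out := by
        intro h
        rw [(card_cls_one_iff q).mpr h] at hq
        omega
      constructor
      · exact Equiv.Perm.cycleOf_mem_cycleFactorsFinset_iff.mpr
          (Equiv.Perm.mem_support.mpr hfix)
      · have hout : qmk σ q.out = q := Quotient.out_eq q
        rw [← cls_not_fixed hfix, hout]
        exact hq
    · intro q1 h1 q2 h2 heq
      simp only [mem_filter, mem_univ, true_and] at h1 h2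
      have hfix2 : σ q2.out ≠ q2.out := by
        intro h
        rw [(card_cls_one_iff q2).mpr h] at h2
        omega
      have hmem : q2.out ∈ (σ.cycleOf q2.out).support :=
        Equiv.Perm.mem_support_cycleOf_iff.mpr
          ⟨Equiv.Perm.SameCycle.refl σ _, Equiv.Perm.mem_support.mpr hfix2⟩
      have heq' : σ.cycleOf q1.out = σ.cycleOf q2.out := heq
      rw [← heq'] at hmem
      have hsc : σ.SameCycle q1.out q2.out :=
        (Equiv.Perm.mem_support_cycleOf_iff.mp hmem).1
      rw [← Quotient.out_eq q1, ← Quotient.out_eq q2]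
      exact qmk_eq_iff.mpr hsc
    · intro c hc
      simp only [mem_filter, mem_univ, true_and] at hc
      obtain ⟨hcf, hcard⟩ := hc
      have hne0 : c.support.Nonempty := by
        rw [← Finset.card_pos, hcard]; omega
      obtain ⟨x, hx⟩ := hne0
      have hceq : c = σ.cycleOf x := Equiv.Perm.cycle_is_cycleOf hx hcf
      have hfx : σ x ≠ x := by
        have hcx : c x ≠ x := (Equiv.Perm.mem_support).mp hx
        have := (Equiv.Perm.mem_cycleFactorsFinset_iff.mp hcf).2 x hx
        rw [← this]
        exact hcx
      refine ⟨qmk σ x, ?_, ?_⟩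
      · simp only [mem_filter, mem_univ, true_and]
        rw [cls_not_fixed hfx, ← hceq, hcard]
      · have hsc : σ.SameCycle (qmk σ x).out x :=
          qmk_eq_iff.mp (Quotient.out_eq (qmk σ x))
        show σ.cycleOf (qmk σ x).out = c
        rw [hsc.cycleOf_eq, hceq]
end C2b

section C2c
variable {m : ℕ} {ι : Type*} [Fintype ι] [DecidableEq ι]

lemma stepC2 (σ : Equiv.Perm (Fin m)) (d : ι → ℝ) :
    ∑ f ∈ univ.filter (fun f : Fin m → ι => f ∘ σ = f), ∏ x, d (f x)
      = ∏ i ∈ Icc 1 m, (∑ j, d j ^ i) ^ cycleCount i σ := by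
  classical
  have key1 : ∑ f ∈ univ.filter (fun f : Fin m → ι => f ∘ σ = f), ∏ x, d (f x)
      = ∑ h : Quotient (scSetoid σ) → ι, ∏ x : Fin m, d (h (qmk σ x)) := by
    refine Finset.sum_nbij' (fun f => fun q => f q.out)
      (fun h => fun x => h (qmk σ x)) ?_ ?_ ?_ ?_ ?_
    · intro f _; exact mem_univ _
    · intro h _
      simp only [mem_filter, mem_univ, true_and]
      funext x
      show h (qmk σ (σ x)) = h (qmk σ x)
      congr 1
      exact qmk_eq_iff.mpr
        ((Equiv.Perm.sameCycle_apply_left).mpr (Equiv.Perm.SameCycle.refl σ x))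
    · intro f hf
      simp only [mem_filter, mem_univ, true_and] at hf
      funext x
      show f (qmk σ x).out = f x
      exact apply_eq_of_sameCycle hf (qmk_eq_iff.mp (Quotient.out_eq (qmk σ x)))
    · intro h _
      funext q
      show h (qmk σ q.out) = h q
      congr 1
      exact Quotient.out_eq q
    · intro f hf
      simp only [mem_filter, mem_univ, true_and] at hf
      refine Finset.prod_congr rfl fun x _ => ?_
      show d (f x) = d (f (qmk σ x).out)
      congr 1
      exact (apply_eq_of_sameCycle hf (qmk_eq_iff.mp (Quotient.out_eq (qmk σ x)))).symm
  rw [key1]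
  have key2 : ∀ h : Quotient (scSetoid σ) → ι, ∏ x : Fin m, d (h (qmk σ x))
      = ∏ q : Quotient (scSetoid σ), d (h q) ^ (cls σ q).card := by
    intro h
    rw [Finset.prod_comp (fun q => d (h q)) (fun x : Fin m => qmk σ x)]
    have himg : (univ : Finset (Fin m)).image (fun x => qmk σ x) = univ :=
      Finset.image_univ_of_surjective (fun q => ⟨q.out, Quotient.out_eq q⟩)
    rw [himg]
    rfl
  rw [Finset.sum_congr rfl fun h _ => key2 h]
  rw [← Fintype.piFinset_univ,
    ← Finset.prod_univ_sum (fun _ => (univ : Finset ι)) (fun q j => d j ^ (cls σ q).card)]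
  rw [Finset.prod_comp (fun i => ∑ j, d j ^ i) (fun q => (cls σ q).card)]
  have hsub : ((univ : Finset (Quotient (scSetoid σ))).image fun q => (cls σ q).card)
      ⊆ Icc 1 m := by
    intro i hi
    simp only [mem_image, mem_univ, true_and] at hi
    obtain ⟨q, rfl⟩ := hi
    rw [mem_Icc]
    refine ⟨Finset.card_pos.mpr ⟨q.out, out_mem_cls q⟩, ?_⟩
    calc (cls σ q).card ≤ (univ : Finset (Fin m)).card := Finset.card_le_card (subset_univ _)
    _ = m := by simp
  have hext : ∀ i ∈ Icc 1 m,
      i ∉ ((univ : Finset (Quotient (scSetoid σ))).image fun q => (cls σ q).card) →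
      (∑ j, d j ^ i) ^ (univ.filter fun q : Quotient (scSetoid σ) =>
        (cls σ q).card = i).card = 1 := by
    intro i _ hnimg
    have hempty : (univ.filter fun q : Quotient (scSetoid σ) => (cls σ q).card = i) = ∅ := by
      rw [Finset.filter_eq_empty_iff]
      intro q _ hc
      exact hnimg (mem_image.mpr ⟨q, mem_univ q, hc⟩)
    rw [hempty, card_empty, pow_zero]
  rw [Finset.prod_subset hsub hext]
  refine Finset.prod_congr rfl fun i hi => ?_
  rw [mem_Icc] at hi
  rw [count_cls hi.1]

end C2c

section C1
variable {m : ℕ}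

lemma stepC1 (σ : Equiv.Perm (Fin m)) :
    ∏ i ∈ Icc 1 m, ((-1 : ℝ) ^ (i + 1)) ^ cycleCount i σ
      = ((Equiv.Perm.sign σ : ℤ) : ℝ) := by
  rcases Nat.eq_zero_or_pos m with rfl | hm
  · have : σ = 1 := Subsingleton.elim σ 1
    subst this
    simp
  -- reduce to a single power of -1
  have hprod : ∏ i ∈ Icc 1 m, ((-1 : ℝ) ^ (i + 1)) ^ cycleCount i σ
      = (-1 : ℝ) ^ ∑ i ∈ Icc 1 m, (i + 1) * cycleCount i σ := by
    rw [← Finset.prod_pow_eq_pow_sum]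
    exact Finset.prod_congr rfl fun i _ => by rw [← pow_mul]
  rw [hprod]
  set T := σ.cycleType with hT
  have hsplit : Icc 1 m = insert 1 (Icc 2 m) := by
    ext j; simp only [mem_Icc, mem_insert]; omega
  have h1notin : (1 : ℕ) ∉ Icc 2 m := by simp
  have hsubT : T.toFinset ⊆ Icc 2 m := by
    intro i hi
    rw [Multiset.mem_toFinset] at hi
    rw [mem_Icc]
    refine ⟨Equiv.Perm.two_le_of_mem_cycleType hi, ?_⟩
    calc i ≤ T.sum := Multiset.single_le_sum (fun x _ => Nat.zero_le x) i hi
    _ = σ.support.card := σ.sum_cycleType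
    _ ≤ (univ : Finset (Fin m)).card := Finset.card_le_card (subset_univ _)
    _ = m := by simp
  have hS2 : ∑ i ∈ Icc 2 m, Multiset.count i T = Multiset.card T := by
    rw [← Multiset.toFinset_sum_count_eq]
    exact (Finset.sum_subset hsubT fun i _ hni =>
      Multiset.count_eq_zero_of_notMem (fun h => hni (Multiset.mem_toFinset.mpr h))).symm
  have hS1 : ∑ i ∈ Icc 2 m, i * Multiset.count i T = T.sum := by
    have hbase : T.sum = ∑ i ∈ T.toFinset, Multiset.count i T • i := by
      conv_lhs => rw [show T = T.map id from (Multiset.map_id T).symm]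
      exact Finset.sum_multiset_map_count T id
    have h1 : ∑ i ∈ T.toFinset, Multiset.count i T • i
        = ∑ i ∈ T.toFinset, i * Multiset.count i T :=
      Finset.sum_congr rfl fun i _ => by rw [smul_eq_mul, mul_comm]
    rw [hbase, h1]
    exact (Finset.sum_subset hsubT fun i _ hni => by
      rw [Multiset.count_eq_zero_of_notMem
        (fun h => hni (Multiset.mem_toFinset.mpr h)), mul_zero]).symm
  have hE : ∑ i ∈ Icc 1 m, (i + 1) * cycleCount i σ
      = 2 * cycleCount 1 σ + (T.sum + Multiset.card T) := by
    rw [hsplit, Finset.sum_insert h1notin]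
    have : ∀ i ∈ Icc 2 m, (i + 1) * cycleCount i σ
        = i * Multiset.count i T + Multiset.count i T := by
      intro i hi
      rw [mem_Icc] at hi
      rw [cycleCount, if_neg (by omega), add_mul, one_mul]
    rw [Finset.sum_congr rfl this, Finset.sum_add_distrib, hS1, hS2]
  rw [hE]
  have hsign := Equiv.Perm.sign_of_cycleType σ
  have : ((Equiv.Perm.sign σ : ℤ) : ℝ) = (-1 : ℝ) ^ (T.sum + Multiset.card T) := by
    rw [hsign]
    push_cast
    rfl
  rw [this, pow_add, pow_mul]
  norm_num

end C1

section C45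
variable {m : ℕ} {ι : Type*} [Fintype ι] [DecidableEq ι]

lemma stepC4 (f : Fin m → ι) :
    ∑ σ ∈ univ.filter (fun σ : Equiv.Perm (Fin m) => f ∘ σ = f),
      ((Equiv.Perm.sign σ : ℤ) : ℝ)
      = if Function.Injective f then 1 else 0 := by
  split_ifs with hf
  · have hone : univ.filter (fun σ : Equiv.Perm (Fin m) => f ∘ σ = f) = {1} := by
      ext σ
      simp only [mem_filter, mem_univ, true_and, mem_singleton]
      constructor
      · intro h
        ext x
        have := hf (congrFun h x)
        simp [this]
      · rintro rfl
        simp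
    rw [hone, Finset.sum_singleton]
    simp
  · obtain ⟨x, y, hfxy, hxy⟩ := Function.not_injective_iff.mp hf
    have hswap : f ∘ (Equiv.swap x y : Equiv.Perm (Fin m)) = f := by
      funext z
      show f (Equiv.swap x y z) = f z
      rcases eq_or_ne z x with rfl | hzx
      · rw [Equiv.swap_apply_left]; exact hfxy.symm
      rcases eq_or_ne z y with rfl | hzy
      · rw [Equiv.swap_apply_right]; exact hfxy
      · rw [Equiv.swap_apply_of_ne_of_ne hzx hzy]
    refine Finset.sum_involution (fun σ _ => Equiv.swap x y * σ) ?_ ?_ ?_ ?_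
    · intro σ _
      rw [Equiv.Perm.sign_mul, Equiv.Perm.sign_swap hxy]
      push_cast
      ring
    · intro σ _ _
      intro hc
      have : Equiv.swap x y = 1 := by
        have := congrArg (· * σ⁻¹) hc
        simpa [mul_assoc] using this
      exact hxy (by rw [← Equiv.swap_apply_left x y, this]; rfl)
    · intro σ hσ
      simp only [mem_filter, mem_univ, true_and] at hσ ⊢
      funext z
      show f (Equiv.swap x y (σ z)) = f z
      rw [show f (Equiv.swap x y (σ z)) = f (σ z) from congrFun hswap (σ z)]
      exact congrFun hσ z
    · intro σ _
      show Equiv.swap x y * (Equiv.swap x y * σ) = σ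
      rw [← mul_assoc, Equiv.swap_mul_self, one_mul]

lemma stepC5 (d : ι → ℝ) :
    ∑ f ∈ univ.filter (fun f : Fin m → ι => Function.Injective f), ∏ x, d (f x)
      = (m.factorial : ℝ) * ∑ t ∈ (univ : Finset ι).powersetCard m, ∏ j ∈ t, d j := by
  have hmaps : ∀ f ∈ univ.filter (fun f : Fin m → ι => Function.Injective f),
      (univ.image f) ∈ (univ : Finset ι).powersetCard m := by
    intro f hf
    simp only [mem_filter, mem_univ, true_and] at hf
    rw [Finset.mem_powersetCard_univ, Finset.card_image_of_injective _ hf]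
    simp
  rw [← Finset.sum_fiberwise_of_maps_to hmaps, Finset.mul_sum]
  refine Finset.sum_congr rfl fun t ht => ?_
  rw [Finset.mem_powersetCard_univ] at ht
  have hval : ∀ f ∈ (univ.filter (fun f : Fin m → ι => Function.Injective f)).filter
      (fun f => univ.image f = t), ∏ x, d (f x) = ∏ j ∈ t, d j := by
    intro f hf
    simp only [mem_filter, mem_univ, true_and] at hf
    rw [← hf.2]
    exact (Finset.prod_image fun a _ b _ h => hf.1 h).symm
  rw [Finset.sum_congr rfl hval, Finset.sum_const, nsmul_eq_mul]
  congr 1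
  -- card of the fiber is m!
  have hcardt : Fintype.card {j // j ∈ t} = m := by
    rw [Fintype.card_coe, ht]
  have hcards : ((univ.filter (fun f : Fin m → ι => Function.Injective f)).filter
      (fun f => univ.image f = t)).card = Fintype.card (Fin m ≃ {j // j ∈ t}) := by
    refine (Finset.card_bij (fun (e : Fin m ≃ {j // j ∈ t}) _ => fun x => (e x : ι))
      ?_ ?_ ?_).symm
    · intro e _
      simp only [mem_filter, mem_univ, true_and]
      constructor
      · intro u v huv
        exact e.injective (Subtype.ext huv)
      · ext j
        simp only [mem_image, mem_univ, true_and]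
        constructor
        · rintro ⟨x, rfl⟩; exact (e x).2
        · intro hj; exact ⟨e.symm ⟨j, hj⟩, by simp⟩
    · intro e1 _ e2 _ heq
      ext x
      exact congrFun heq x
    · intro f hf
      simp only [mem_filter, mem_univ, true_and] at hf
      have hmem : ∀ x, f x ∈ t := by
        intro x
        rw [← hf.2]
        exact mem_image.mpr ⟨x, mem_univ x, rfl⟩
      have hinj : Function.Injective (fun x => (⟨f x, hmem x⟩ : {j // j ∈ t})) := by
        intro u v huv
        exact hf.1 (congrArg Subtype.val huv)
      have hbij : Function.Bijective (fun x => (⟨f x, hmem x⟩ : {j // j ∈ t})) :=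
        (Fintype.bijective_iff_injective_and_card _).mpr ⟨hinj, by simp [hcardt]⟩
      exact ⟨Equiv.ofBijective _ hbij, mem_univ _, rfl⟩
  rw [hcards, Fintype.card_equiv ((Finset.equivFin t).trans (finCongr ht)).symm]
  simp

end C45

section Core
variable {ι : Type*} [Fintype ι] [DecidableEq ι]

lemma core_identity (m : ℕ) (d : ι → ℝ) :
    ∑ σ : Equiv.Perm (Fin m), ∏ i ∈ Icc 1 m,
        ((-1 : ℝ) ^ (i + 1) * ∑ j, d j ^ i) ^ cycleCount i σ
      = (m.factorial : ℝ) * ∑ t ∈ (univ : Finset ι).powersetCard m, ∏ j ∈ t, d j := by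
  have h1 : ∀ σ : Equiv.Perm (Fin m),
      ∏ i ∈ Icc 1 m, ((-1 : ℝ) ^ (i + 1) * ∑ j, d j ^ i) ^ cycleCount i σ
        = ∑ f ∈ univ.filter (fun f : Fin m → ι => f ∘ σ = f),
            ((Equiv.Perm.sign σ : ℤ) : ℝ) * ∏ x, d (f x) := by
    intro σ
    rw [← Finset.mul_sum, stepC2 σ d, ← stepC1 σ]
    rw [← Finset.prod_mul_distrib]
    exact Finset.prod_congr rfl fun i _ => by rw [mul_pow]
  rw [Finset.sum_congr rfl fun σ _ => h1 σ]
  rw [Finset.sum_comm' (s' := fun f : Fin m → ι =>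
      univ.filter (fun σ : Equiv.Perm (Fin m) => f ∘ σ = f))
      (t' := (univ : Finset (Fin m → ι)))
      (by intro σ f; simp only [mem_filter, mem_univ, true_and, and_comm])]
  have h2 : ∀ f : Fin m → ι,
      ∑ σ ∈ univ.filter (fun σ : Equiv.Perm (Fin m) => f ∘ σ = f),
        ((Equiv.Perm.sign σ : ℤ) : ℝ) * ∏ x, d (f x)
      = (if Function.Injective f then 1 else 0) * ∏ x, d (f x) := by
    intro f
    rw [← Finset.sum_mul, stepC4]
  rw [Finset.sum_congr rfl fun f _ => h2 f]
  rw [← stepC5 d]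
  rw [Finset.sum_filter]
  exact Finset.sum_congr rfl fun f _ => by split_ifs <;> simp

end Core

section Poly
open Polynomial

lemma iteratedDeriv_polynomial_eval (q : ℝ[X]) (k : ℕ) :
    iteratedDeriv k (fun t => q.eval t) = fun t => (Polynomial.derivative^[k] q).eval t := by
  induction k with
  | zero => simp [iteratedDeriv_zero]
  | succ k ih =>
    rw [iteratedDeriv_succ, ih]
    funext t
    rw [Function.iterate_succ_apply']
    exact Polynomial.deriv (p := Polynomial.derivative^[k] q)

lemma factorial_inv_iterate_deriv_eval (q : ℝ[X]) (k : ℕ) (r : ℝ) :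
    (k.factorial : ℝ)⁻¹ * (Polynomial.derivative^[k] q).eval r
      = ((Polynomial.taylor r q).coeff k) := by
  have h1 : Polynomial.derivative^[k] q = k.factorial • Polynomial.hasseDeriv k q := by
    rw [← Polynomial.factorial_smul_hasseDeriv]
    rfl
  rw [h1, Polynomial.taylor_coeff]
  rw [show (k.factorial • Polynomial.hasseDeriv k q) = ((k.factorial : ℝ[X]) *
    Polynomial.hasseDeriv k q) from nsmul_eq_mul _ _]
  rw [Polynomial.eval_mul, Polynomial.eval_natCast, ← mul_assoc,
    inv_mul_cancel₀ (by exact_mod_cast Nat.factorial_ne_zero k), one_mul]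

end Poly

section Transfer

/-- transfer sums over `powersetCard` of a subtype's univ to the ambient finset -/
lemma sum_powersetCard_subtype {β : Type*} [DecidableEq β] (s : Finset β) (m : ℕ)
    (g : β → ℝ) :
    ∑ t ∈ (univ : Finset {x // x ∈ s}).powersetCard m, ∏ j ∈ t, g j.1
      = ∑ u ∈ s.powersetCard m, ∏ j ∈ u, g j := by
  refine Finset.sum_nbij' (fun t => t.map (Function.Embedding.subtype _))
    (fun u => u.subtype (· ∈ s)) ?_ ?_ ?_ ?_ ?_
  · intro t ht
    rw [Finset.mem_powersetCard] at ht ⊢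
    constructor
    · intro x hx
      rw [Finset.mem_map] at hx
      obtain ⟨y, _, rfl⟩ := hx
      exact y.2
    · rw [Finset.card_map]; exact ht.2
  · intro u hu
    rw [Finset.mem_powersetCard] at hu
    rw [Finset.mem_powersetCard]
    refine ⟨subset_univ _, ?_⟩
    rw [Finset.card_subtype, Finset.filter_true_of_mem (fun x hx => hu.1 hx), hu.2]
  · intro t _
    ext x
    simp [Finset.mem_subtype]
  · intro u hu
    rw [Finset.mem_powersetCard] at hu
    show (u.subtype (· ∈ s)).map (Function.Embedding.subtype _) = u
    rw [Finset.subtype_map]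
    exact Finset.filter_true_of_mem (fun x hx => hu.1 hx)
  · intro t _
    rw [Finset.prod_map]
    rfl

end Transfer

/-- For distinct nodes `a_0,…,a_n`, `Ω(x) = ∏ (x - a_j)` and `k ≥ 1`:
`(1/k!) Ω^{(k)}(a_i) = Ω'(a_i) · Z_{k-1}(-S_{1,i}(a_i),…,-S_{k-1,i}(a_i))` with
`S_{r,i}(x) = ∑_{j ≠ i} (a_j - x)^{-r}`. -/
theorem iteratedDeriv_prod_at_node_cycleIndex (n : ℕ) (a : Fin (n + 1) → ℝ)
    (ha : Function.Injective a) (i : Fin (n + 1)) (k : ℕ) (hk : 1 ≤ k) :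
    (k.factorial : ℝ)⁻¹ * iteratedDeriv k (fun t => ∏ j, (t - a j)) (a i) =
      deriv (fun t => ∏ j, (t - a j)) (a i) *
        cycleIndex (k - 1)
          (fun r => -∑ j ∈ Finset.univ.erase i, ((a j - a i) ^ r)⁻¹) := by
  classical
  obtain ⟨m, rfl⟩ : ∃ m, k = m + 1 := ⟨k - 1, by omega⟩
  simp only [Nat.add_sub_cancel]
  set s : Finset (Fin (n + 1)) := univ.erase i with hs
  set Q : Polynomial ℝ := ∏ j ∈ s, (Polynomial.X + Polynomial.C (a i - a j)) with hQdef
  have hfun : (fun t : ℝ => ∏ j, (t - a j))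
      = fun t => (∏ j, (Polynomial.X - Polynomial.C (a j))).eval t := by
    funext t
    rw [Polynomial.eval_prod]
    simp
  have htaylor : Polynomial.taylor (a i) (∏ j, (Polynomial.X - Polynomial.C (a j)))
      = Polynomial.X * Q := by
    rw [Polynomial.taylor_apply, Polynomial.prod_comp]
    have hc : ∀ j : Fin (n + 1), (Polynomial.X - Polynomial.C (a j)).comp
        (Polynomial.X + Polynomial.C (a i))
        = Polynomial.X + Polynomial.C (a i - a j) := by
      intro j
      rw [Polynomial.sub_comp, Polynomial.X_comp, Polynomial.C_comp, Polynomial.C_sub]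
      ring
    rw [Finset.prod_congr rfl fun j _ => hc j,
      ← Finset.mul_prod_erase univ _ (mem_univ i)]
    rw [show (Polynomial.X + Polynomial.C (a i - a i)) = Polynomial.X from by
      rw [sub_self, Polynomial.C_0, add_zero]]
  have hcoeff : ∀ N : ℕ, ((N + 1).factorial : ℝ)⁻¹ *
      iteratedDeriv (N + 1) (fun t => ∏ j, (t - a j)) (a i) = Q.coeff N := by
    intro N
    have h1 : iteratedDeriv (N + 1) (fun t => ∏ j, (t - a j)) (a i)
        = (Polynomial.derivative^[N + 1] (∏ j, (Polynomial.X - Polynomial.C (a j)))).eval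
            (a i) := by
      rw [hfun, iteratedDeriv_polynomial_eval]
    rw [h1, factorial_inv_iterate_deriv_eval, htaylor, Polynomial.coeff_X_mul]
  have hderiv : deriv (fun t => ∏ j, (t - a j)) (a i) = Q.coeff 0 := by
    have h0 := hcoeff 0
    rw [Nat.factorial_one] at h0
    simpa [iteratedDeriv_one] using h0
  have hcards : s.card = n := by
    rw [hs, Finset.card_erase_of_mem (mem_univ i), Finset.card_univ]
    simp
  have hne : ∀ j ∈ s, a i - a j ≠ 0 := by
    intro j hj
    have hji : j ≠ i := by
      rw [hs] at hj
      exact (Finset.mem_erase.mp hj).1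
    exact sub_ne_zero.mpr (ha.ne hji.symm)
  have hQ0 : Q.coeff 0 = ∏ j ∈ s, (a i - a j) := by
    rw [hQdef, Finset.prod_X_add_C_coeff s (fun j => a i - a j) (Nat.zero_le _)]
    rw [Nat.sub_zero, Finset.powersetCard_self, Finset.sum_singleton]
  have hx : (fun r => -∑ j ∈ Finset.univ.erase i, ((a j - a i) ^ r)⁻¹)
      = fun r => (-1 : ℝ) ^ (r + 1) * ∑ j : {x // x ∈ s}, ((a i - a j.1)⁻¹) ^ r := by
    funext r
    rw [Finset.sum_coe_sort s (fun j => ((a i - a j)⁻¹) ^ r)]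
    have hterm : ∀ j ∈ s, ((a j - a i) ^ r)⁻¹ = (-1 : ℝ) ^ r * ((a i - a j)⁻¹) ^ r := by
      intro j _
      rw [← inv_pow,
        show (a j - a i)⁻¹ = (-1) * (a i - a j)⁻¹ from by
          rw [show a j - a i = -(a i - a j) from by ring, inv_neg]; ring,
        mul_pow]
    rw [show (univ.erase i) = s from rfl, Finset.sum_congr rfl hterm, ← Finset.mul_sum,
      pow_succ]
    ring
  have hZ : cycleIndex m
      (fun r => (-1 : ℝ) ^ (r + 1) * ∑ j : {x // x ∈ s}, ((a i - a j.1)⁻¹) ^ r)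
      = ∑ u ∈ s.powersetCard m, ∏ j ∈ u, (a i - a j)⁻¹ := by
    simp only [cycleIndex]
    rw [core_identity m (fun j : {x // x ∈ s} => (a i - a j.1)⁻¹)]
    rw [← mul_assoc, inv_mul_cancel₀ (by exact_mod_cast Nat.factorial_ne_zero m), one_mul]
    exact sum_powersetCard_subtype s m (fun j => (a i - a j)⁻¹)
  rw [hcoeff m, hderiv, hQ0, hx, hZ]
  by_cases hmn : m ≤ n
  · rw [hQdef, Finset.prod_X_add_C_coeff s _ (by omega : m ≤ s.card), Finset.mul_sum]
    refine Finset.sum_nbij' (fun v => s \ v) (fun u => s \ u) ?_ ?_ ?_ ?_ ?_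
    · intro v hv
      rw [Finset.mem_powersetCard] at hv ⊢
      refine ⟨Finset.sdiff_subset, ?_⟩
      rw [Finset.card_sdiff_of_subset hv.1, hv.2]
      omega
    · intro u hu
      rw [Finset.mem_powersetCard] at hu ⊢
      refine ⟨Finset.sdiff_subset, ?_⟩
      rw [Finset.card_sdiff_of_subset hu.1, hu.2]
    · intro v hv
      exact Finset.sdiff_sdiff_eq_self (Finset.mem_powersetCard.mp hv).1
    · intro u hu
      exact Finset.sdiff_sdiff_eq_self (Finset.mem_powersetCard.mp hu).1
    · intro v hv
      have hvsub : v ⊆ s := (Finset.mem_powersetCard.mp hv).1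
      have hnz : (∏ j ∈ s \ v, (a i - a j)) ≠ 0 :=
        Finset.prod_ne_zero_iff.mpr fun j hj => hne j (Finset.sdiff_subset hj)
      rw [Finset.prod_inv_distrib, ← Finset.prod_sdiff hvsub,
        mul_comm (∏ j ∈ s \ v, (a i - a j)) (∏ j ∈ v, (a i - a j)),
        mul_assoc, mul_inv_cancel₀ hnz, mul_one]
  · have h1 : Q.coeff m = 0 := by
      apply Polynomial.coeff_eq_zero_of_natDegree_lt
      rw [hQdef, Polynomial.natDegree_prod _ _
        (fun j _ => Polynomial.X_add_C_ne_zero (a i - a j))]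
      simp only [Polynomial.natDegree_X_add_C, Finset.sum_const, smul_eq_mul, mul_one]
      omega
    have h2 : s.powersetCard m = ∅ := Finset.powersetCard_eq_empty.mpr (by omega)
    rw [h1, h2]
    simp
end

section
/- Let a_0,…,a_n be distinct real numbers and let l_i(x) = ∏_{j≠i} (x−a_j)/(a_i−a_j) be the i-th Lagrange fundamental polynomial. Then for every k ≥ 0 and every x distinct from all a_j with j ≠ i, (1/k!) l_i^{(k)}(x) = l_i(x) · Z_k(−S_{1,i}(x), …, −S_{k,i}(x)), where S_{r,i}(x) = Σ_{j≠i} 1/(a_j − x)^r. -/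
open Finset

set_option linter.unusedSectionVars false
set_option maxHeartbeats 1000000

namespace Aux
open Equiv Equiv.Perm Polynomial

section Perm
variable {k : ℕ}

def orb (σ : Equiv.Perm (Fin k)) (v : Fin k) : Finset (Fin k) :=
  univ.filter fun u => σ.SameCycle v u

def orbs (σ : Equiv.Perm (Fin k)) : Finset (Finset (Fin k)) := univ.image (orb σ)

lemma mem_orb {σ : Perm (Fin k)} {v u : Fin k} : u ∈ orb σ v ↔ σ.SameCycle v u := by
  simp [orb]

lemma self_mem_orb (σ : Perm (Fin k)) (v : Fin k) : v ∈ orb σ v :=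
  mem_orb.2 (SameCycle.refl σ v)

lemma orb_eq_of_sameCycle {σ : Perm (Fin k)} {v u : Fin k} (h : σ.SameCycle v u) :
    orb σ v = orb σ u :=
  Finset.ext fun w => by
    simp only [mem_orb]
    exact ⟨fun h' => h.symm.trans h', fun h' => h.trans h'⟩

lemma orb_mem_orbs (σ : Perm (Fin k)) (v : Fin k) : orb σ v ∈ orbs σ :=
  mem_image_of_mem _ (mem_univ v)

lemma orb_eq_of_mem {σ : Perm (Fin k)} {b : Finset (Fin k)} (hb : b ∈ orbs σ) {v : Fin k}
    (hv : v ∈ b) : orb σ v = b := by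
  obtain ⟨w, -, rfl⟩ := mem_image.1 hb
  exact (orb_eq_of_sameCycle (mem_orb.1 hv)).symm

lemma orb_eq_singleton {σ : Perm (Fin k)} {v : Fin k} (h : σ v = v) : orb σ v = {v} := by
  ext u
  simp only [mem_orb, Finset.mem_singleton]
  constructor
  · rintro ⟨m, rfl⟩
    exact zpow_apply_eq_self_of_apply_eq_self h m
  · rintro rfl
    exact SameCycle.refl σ _

lemma support_cycleOf_eq_orb {σ : Perm (Fin k)} {v : Fin k} (hv : v ∈ σ.support) :
    (σ.cycleOf v).support = orb σ v := by
  ext u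
  simp only [mem_orb, Equiv.Perm.mem_support_cycleOf_iff]
  exact and_iff_left hv

lemma cycleCount_one_eq (σ : Perm (Fin k)) :
    cycleCount 1 σ = ((orbs σ).filter fun b => b.card = 1).card := by
  rw [cycleCount, if_pos rfl]
  refine Finset.card_bij (fun v _ => orb σ v) ?_ ?_ ?_
  · intro v hv
    simp only [mem_filter, mem_univ, true_and] at hv ⊢
    exact ⟨orb_mem_orbs σ v, by rw [orb_eq_singleton hv]; simp⟩
  · intro v hv w hw h
    simp only [mem_filter, mem_univ, true_and] at hv hw
    rw [orb_eq_singleton hv, orb_eq_singleton hw] at h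
    exact Finset.singleton_injective h
  · intro b hb
    simp only [mem_filter, mem_univ, true_and] at hb
    obtain ⟨hb1, hb2⟩ := hb
    obtain ⟨w, rfl⟩ := Finset.card_eq_one.1 hb2
    have hw : w ∈ ({w} : Finset (Fin k)) := Finset.mem_singleton_self w
    have horb : orb σ w = {w} := orb_eq_of_mem hb1 hw
    have hσw : σ w ∈ orb σ w := mem_orb.2 ⟨1, by simp⟩
    rw [horb, Finset.mem_singleton] at hσw
    exact ⟨w, by simp [hσw], horb⟩

lemma cycleCount_eq (σ : Perm (Fin k)) {r : ℕ} (hr : 2 ≤ r) :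
    cycleCount r σ = ((orbs σ).filter fun b => b.card = r).card := by
  rw [cycleCount, if_neg (by omega)]
  have h1 : Multiset.count r σ.cycleType
      = (σ.cycleFactorsFinset.filter fun c => r = c.support.card).card := by
    rw [Equiv.Perm.cycleType_def, Multiset.count_map]
    rfl
  rw [h1]
  refine Finset.card_bij (fun c _ => c.support) ?_ ?_ ?_
  · intro c hc
    simp only [mem_filter] at hc ⊢
    obtain ⟨hc1, hc2⟩ := hc
    have hcyc : c.IsCycle := (mem_cycleFactorsFinset_iff.1 hc1).1
    obtain ⟨v, hv⟩ := hcyc.nonempty_support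
    have hcv : c = σ.cycleOf v := cycle_is_cycleOf hv hc1
    have hvs : v ∈ σ.support := by
      rw [hcv] at hv
      exact (mem_support_cycleOf_iff.1 hv).2
    refine ⟨?_, hc2.symm⟩
    rw [hcv, support_cycleOf_eq_orb hvs]
    exact orb_mem_orbs σ v
  · intro c hc d hd h
    simp only [mem_filter] at hc hd
    obtain ⟨v, hv⟩ := ((mem_cycleFactorsFinset_iff.1 hc.1).1).nonempty_support
    have hv' : v ∈ d.support := h ▸ hv
    rw [cycle_is_cycleOf hv hc.1, cycle_is_cycleOf hv' hd.1]
  · intro b hb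
    simp only [mem_filter] at hb
    obtain ⟨hb1, hb2⟩ := hb
    obtain ⟨v, hv⟩ := Finset.card_pos.1 (by omega : 0 < b.card)
    have horb : orb σ v = b := orb_eq_of_mem hb1 hv
    have hvs : v ∈ σ.support := by
      rw [mem_support]
      intro hfix
      rw [orb_eq_singleton hfix] at horb
      rw [← horb] at hb2
      simp at hb2
      omega
    refine ⟨σ.cycleOf v, ?_, ?_⟩
    · simp only [mem_filter]
      refine ⟨cycleOf_mem_cycleFactorsFinset_iff.2 hvs, ?_⟩
      rw [support_cycleOf_eq_orb hvs, horb, hb2]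
    · rw [support_cycleOf_eq_orb hvs, horb]

lemma nonempty_of_mem_orbs {σ : Perm (Fin k)} {b : Finset (Fin k)} (hb : b ∈ orbs σ) :
    b.Nonempty := by
  obtain ⟨w, -, rfl⟩ := mem_image.1 hb
  exact ⟨w, self_mem_orb σ w⟩

lemma fiber_eq {σ : Perm (Fin k)} {b : Finset (Fin k)} (hb : b ∈ orbs σ) :
    univ.filter (fun u => orb σ u = b) = b := by
  ext u
  simp only [mem_filter, mem_univ, true_and]
  exact ⟨fun h => h ▸ self_mem_orb σ u, fun h => orb_eq_of_mem hb h⟩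

lemma card_mem_Icc {σ : Perm (Fin k)} {b : Finset (Fin k)} (hb : b ∈ orbs σ) :
    b.card ∈ Icc 1 k := by
  rw [mem_Icc]
  exact ⟨Nat.one_le_iff_ne_zero.2 (Finset.card_ne_zero_of_mem (nonempty_of_mem_orbs hb).choose_spec),
    le_trans (Finset.card_le_univ b) (by simp)⟩

lemma sum_card_orbs (σ : Perm (Fin k)) : ∑ b ∈ orbs σ, b.card = k := by
  have := Finset.card_eq_sum_card_fiberwise
    (f := orb σ) (s := (univ : Finset (Fin k))) (t := orbs σ)
    (fun v _ => orb_mem_orbs σ v)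
  simp only [card_univ, Fintype.card_fin] at this
  calc ∑ b ∈ orbs σ, b.card
      = ∑ b ∈ orbs σ, (univ.filter (fun a => orb σ a = b)).card :=
        Finset.sum_congr rfl fun b hb => (congrArg Finset.card (fiber_eq hb)).symm
    _ = k := this.symm

lemma cycleCount_eq_N (σ : Perm (Fin k)) {r : ℕ} (hr : r ∈ Icc 1 k) :
    cycleCount r σ = ((orbs σ).filter fun b => b.card = r).card := by
  rcases eq_or_ne r 1 with rfl | h
  · exact cycleCount_one_eq σ
  · exact cycleCount_eq σ (by rw [mem_Icc] at hr; omega)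

lemma prod_orbs (σ : Perm (Fin k)) (y : ℕ → ℝ) :
    ∏ r ∈ Icc 1 k, y r ^ cycleCount r σ = ∏ b ∈ orbs σ, y b.card := by
  rw [← Finset.prod_fiberwise_of_maps_to (g := fun b => b.card)
    (fun b hb => card_mem_Icc hb) (fun b => y b.card)]
  refine Finset.prod_congr rfl fun r hr => ?_
  rw [cycleCount_eq_N σ hr, ← Finset.prod_const]
  exact (Finset.prod_congr rfl fun b hb => by rw [(mem_filter.1 hb).2]).symm

lemma sum_N (σ : Perm (Fin k)) : ∑ r ∈ Icc 1 k, cycleCount r σ = (orbs σ).card := by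
  rw [Finset.card_eq_sum_card_fiberwise (f := fun b => b.card) (t := Icc 1 k)
    (fun b hb => card_mem_Icc hb)]
  exact Finset.sum_congr rfl fun r hr => cycleCount_eq_N σ hr

lemma sum_mul_N (σ : Perm (Fin k)) : ∑ r ∈ Icc 1 k, r * cycleCount r σ = k := by
  conv_rhs => rw [← sum_card_orbs σ]
  rw [← Finset.sum_fiberwise_of_maps_to (g := fun b => b.card)
    (fun b hb => card_mem_Icc hb) (fun b => b.card)]
  refine Finset.sum_congr rfl fun r hr => ?_
  rw [cycleCount_eq_N σ hr]
  rw [Finset.sum_congr rfl (fun b hb => (mem_filter.1 hb).2), Finset.sum_const, smul_eq_mul,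
    mul_comm]

lemma key_parity (σ : Perm (Fin k)) :
    σ.cycleType.sum + Multiset.card σ.cycleType + 2 * cycleCount 1 σ = k + (orbs σ).card := by
  rcases Nat.eq_zero_or_pos k with rfl | hk
  · have h0 : σ = 1 := Subsingleton.elim σ 1
    have h2 : (orbs σ).card = 0 := by rw [← sum_N σ]; simp
    have h3 : cycleCount 1 σ = 0 := by
      rw [cycleCount, if_pos rfl]
      simp
    have h4 : σ.cycleType = 0 := by rw [h0]; exact Equiv.Perm.cycleType_one
    simp [h4, h3, h2]
  · have hsub : σ.cycleType.toFinset ⊆ Icc 2 k := by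
      intro r hr
      rw [Multiset.mem_toFinset] at hr
      rw [mem_Icc]
      refine ⟨Equiv.Perm.two_le_of_mem_cycleType hr, ?_⟩
      calc r ≤ σ.cycleType.sum := Multiset.single_le_sum (fun y _ => Nat.zero_le y) _ hr
        _ = σ.support.card := Equiv.Perm.sum_cycleType σ
        _ ≤ k := by simpa using Finset.card_le_univ σ.support
    have hIcc : Icc 1 k = insert 1 (Icc 2 k) := by ext r; simp [mem_Icc]; omega
    have h1 : (1 : ℕ) ∉ Icc 2 k := by simp
    have hcount : ∀ r ∈ Icc 2 k, cycleCount r σ = Multiset.count r σ.cycleType := by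
      intro r hr
      rw [cycleCount, if_neg]
      rw [mem_Icc] at hr; omega
    have h_supp : σ.cycleType.sum + cycleCount 1 σ = k := by
      rw [Equiv.Perm.sum_cycleType, cycleCount, if_pos rfl]
      have := Finset.card_filter_add_card_filter_not (s := (univ : Finset (Fin k)))
        (p := fun a => σ a = a)
      simp only [Finset.card_univ, Fintype.card_fin] at this
      have hs : σ.support = univ.filter (fun a => ¬ σ a = a) := by
        ext u; simp [Equiv.Perm.mem_support]
      rw [hs, add_comm]
      exact this
    have h_cardCT : Multiset.card σ.cycleType = ∑ r ∈ Icc 2 k, cycleCount r σ := by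
      rw [← Multiset.toFinset_sum_count_eq σ.cycleType,
        Finset.sum_subset hsub (fun r _ hr =>
          Multiset.count_eq_zero_of_notMem (by simpa using hr))]
      exact Finset.sum_congr rfl fun r hr => (hcount r hr).symm
    have h_orbs : (orbs σ).card = cycleCount 1 σ + ∑ r ∈ Icc 2 k, cycleCount r σ := by
      rw [← sum_N σ, hIcc, Finset.sum_insert h1]
    omega

lemma sign_eq (σ : Perm (Fin k)) :
    ((Equiv.Perm.sign σ : ℤ) : ℝ) = (-1 : ℝ) ^ (k + (orbs σ).card) := by
  rw [Equiv.Perm.sign_of_cycleType, ← key_parity σ]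
  push_cast
  simp [pow_add, pow_mul]



end Perm

section Func
variable {k : ℕ} {ι : Type} [Fintype ι] [DecidableEq ι]

lemma invariant_zpow {σ : Perm (Fin k)} {f : Fin k → ι} (hf : ∀ v, f (σ v) = f v) :
    ∀ (m : ℤ) (u : Fin k), f ((σ ^ m) u) = f u := by
  intro m
  induction m using Int.induction_on with
  | zero => simp
  | succ i ih =>
    intro u
    have : (σ ^ ((i : ℤ) + 1)) u = (σ ^ (i : ℤ)) (σ u) := by
      rw [zpow_add_one, Equiv.Perm.mul_apply]
    rw [this, ih (σ u), hf u]
  | pred i ih =>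
    intro u
    have : (σ ^ (-(i : ℤ) - 1)) u = (σ ^ (-(i : ℤ))) (σ⁻¹ u) := by
      rw [zpow_sub_one, Equiv.Perm.mul_apply]
    rw [this, ih (σ⁻¹ u)]
    conv_rhs => rw [← (show σ (σ⁻¹ u) = u from Equiv.apply_symm_apply σ u), hf (σ⁻¹ u)]

lemma invariant_constant {σ : Perm (Fin k)} {f : Fin k → ι} (hf : ∀ v, f (σ v) = f v)
    {u v : Fin k} (h : σ.SameCycle u v) : f u = f v := by
  obtain ⟨m, rfl⟩ := h
  exact (invariant_zpow hf m u).symm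

lemma prod_ite_all (σ : Perm (Fin k)) (t : ι → ℝ) (f : Fin k → ι) :
    (∏ v, if f (σ v) = f v then t (f v) else 0)
      = if (∀ v, f (σ v) = f v) then ∏ v, t (f v) else 0 := by
  by_cases h : ∀ v, f (σ v) = f v
  · rw [if_pos h]
    exact Finset.prod_congr rfl fun v _ => if_pos (h v)
  · rw [if_neg h]
    push_neg at h
    obtain ⟨v, hv⟩ := h
    exact Finset.prod_eq_zero (mem_univ v) (if_neg hv)

lemma step1 (σ : Perm (Fin k)) (t : ι → ℝ) :
    ∏ b ∈ orbs σ, (∑ j : ι, t j ^ b.card)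
      = ∑ f : Fin k → ι, ∏ v, (if f (σ v) = f v then t (f v) else 0) := by
  have hq : ∀ v : Fin k, (⟨orb σ v, orb_mem_orbs σ v⟩ : {b // b ∈ orbs σ}) ∈ univ :=
    fun _ => mem_univ _
  calc ∏ b ∈ orbs σ, (∑ j : ι, t j ^ b.card)
      = ∏ b : {b // b ∈ orbs σ}, (∑ j : ι, t j ^ (b : Finset (Fin k)).card) :=
        (Finset.prod_coe_sort (orbs σ) (fun b => ∑ j : ι, t j ^ b.card)).symm
    _ = ∑ g : {b // b ∈ orbs σ} → ι, ∏ b : {b // b ∈ orbs σ},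
          t (g b) ^ (b : Finset (Fin k)).card := Fintype.prod_sum _
    _ = ∑ f ∈ (univ : Finset (Fin k → ι)).filter (fun f => ∀ v, f (σ v) = f v),
          ∏ v, t (f v) := ?_
    _ = ∑ f : Fin k → ι, ∏ v, (if f (σ v) = f v then t (f v) else 0) := by
        rw [Finset.sum_filter]
        exact Finset.sum_congr rfl fun f _ => (prod_ite_all σ t f).symm
  refine Finset.sum_nbij' (i := fun g => fun v => g ⟨orb σ v, orb_mem_orbs σ v⟩)
    (j := fun f => fun b => f ((b : Finset (Fin k)).min' (nonempty_of_mem_orbs b.2)))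
    ?_ ?_ ?_ ?_ ?_
  · intro g _
    simp only [mem_filter, mem_univ, true_and]
    intro v
    have h1 : σ.SameCycle v (σ v) := ⟨1, by simp⟩
    have : orb σ (σ v) = orb σ v := (orb_eq_of_sameCycle h1).symm
    exact congrArg g (Subtype.ext this)
  · intro f _
    exact mem_univ _
  · intro g _
    funext b
    have hmin : (b : Finset (Fin k)).min' (nonempty_of_mem_orbs b.2) ∈ (b : Finset (Fin k)) :=
      Finset.min'_mem _ _
    have : orb σ ((b : Finset (Fin k)).min' (nonempty_of_mem_orbs b.2)) = (b : Finset (Fin k)) :=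
      orb_eq_of_mem b.2 hmin
    exact congrArg g (Subtype.ext this)
  · intro f hf
    simp only [mem_filter, mem_univ, true_and] at hf
    funext v
    have hmin : (orb σ v).min' (nonempty_of_mem_orbs (orb_mem_orbs σ v)) ∈ orb σ v :=
      Finset.min'_mem _ _
    exact (invariant_constant hf (mem_orb.1 hmin)).symm
  · intro g _
    have := Finset.prod_fiberwise_of_maps_to
      (g := fun v : Fin k => (⟨orb σ v, orb_mem_orbs σ v⟩ : {b // b ∈ orbs σ}))
      (s := (univ : Finset (Fin k))) (t := (univ : Finset {b // b ∈ orbs σ}))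
      (fun v _ => mem_univ _) (fun v => t (g ⟨orb σ v, orb_mem_orbs σ v⟩))
    rw [← this]
    refine Finset.prod_congr rfl fun b _ => ?_
    have hfib : univ.filter
        (fun v => (⟨orb σ v, orb_mem_orbs σ v⟩ : {b // b ∈ orbs σ}) = b)
        = (b : Finset (Fin k)) := by
      rw [← fiber_eq b.2]
      ext v
      simp only [mem_filter, mem_univ, true_and, Subtype.ext_iff]
    rw [hfib]
    exact ((Finset.prod_congr rfl (fun v hv =>
      congrArg (fun z => t (g z)) (Subtype.ext (orb_eq_of_mem b.2 hv)))).trans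
      (Finset.prod_const _)).symm
lemma det_M (t : ι → ℝ) (f : Fin k → ι) :
    (Matrix.of fun u v => if f u = f v then t (f v) else 0 : Matrix (Fin k) (Fin k) ℝ).det
      = if Function.Injective f then ∏ v, t (f v) else 0 := by
  by_cases h : Function.Injective f
  · rw [if_pos h]
    have hdiag : (Matrix.of fun u v => if f u = f v then t (f v) else 0 : Matrix (Fin k) (Fin k) ℝ)
        = Matrix.diagonal (fun v => t (f v)) := by
      ext u v
      rcases eq_or_ne u v with rfl | huv
      · simp
      · rw [Matrix.of_apply, Matrix.diagonal_apply_ne _ huv, if_neg (fun hc => huv (h hc))]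
    rw [hdiag, Matrix.det_diagonal]
  · rw [if_neg h]
    rw [Function.not_injective_iff] at h
    obtain ⟨u, w, hfe, hne⟩ := h
    refine Matrix.det_zero_of_row_eq hne (funext fun v => ?_)
    simp only [Matrix.of_apply]
    rw [hfe]

lemma card_fiber {s : Finset ι} (hs : s ∈ powersetCard k (univ : Finset ι)) :
    (((univ : Finset (Fin k → ι)).filter (fun f => Function.Injective f)).filter
        (fun f => univ.image f = s)).card = k.factorial := by
  obtain ⟨-, hcard⟩ := mem_powersetCard.1 hs
  have e : {j // j ∈ s} ≃ Fin k := Fintype.equivFinOfCardEq (by rw [Fintype.card_coe, hcard])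
  set f₀ : Fin k → ι := fun v => (e.symm v : ι) with hf₀
  have hf₀inj : Function.Injective f₀ :=
    fun u v h => e.symm.injective (Subtype.ext h)
  have hf₀im : univ.image f₀ = s := by
    ext j
    simp only [Finset.mem_image, mem_univ, true_and]
    constructor
    · rintro ⟨v, rfl⟩; exact (e.symm v).2
    · intro hj
      refine ⟨e ⟨j, hj⟩, ?_⟩
      show ((e.symm (e ⟨j, hj⟩) : {j // j ∈ s}) : ι) = j
      rw [Equiv.symm_apply_apply]
  have : (univ : Finset (Equiv.Perm (Fin k))).card =
      (((univ : Finset (Fin k → ι)).filter (fun f => Function.Injective f)).filter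
        (fun f => univ.image f = s)).card := by
    refine Finset.card_bij (fun π _ => f₀ ∘ π) ?_ ?_ ?_
    · intro π _
      simp only [mem_filter, mem_univ, true_and]
      refine ⟨hf₀inj.comp π.injective, ?_⟩
      rw [← hf₀im]
      ext j
      simp only [Finset.mem_image, mem_univ, true_and, Function.comp_apply]
      exact ⟨fun ⟨v, hv⟩ => ⟨π v, hv⟩, fun ⟨v, hv⟩ => ⟨π.symm v, by rwa [Equiv.apply_symm_apply]⟩⟩
    · intro π _ π' _ h
      exact Equiv.ext fun v => hf₀inj (congrFun h v)
    · intro f hf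
      simp only [mem_filter, mem_univ, true_and] at hf
      obtain ⟨hinj, him⟩ := hf
      have hmem : ∀ v, f v ∈ s := fun v => him ▸ Finset.mem_image_of_mem f (mem_univ v)
      set π₀ : Fin k → Fin k := fun v => e ⟨f v, hmem v⟩ with hπ₀
      have hπ₀inj : Function.Injective π₀ := by
        intro u v h
        apply hinj
        have := e.injective h
        exact congrArg Subtype.val this
      have hbij := (Finite.injective_iff_bijective).1 hπ₀inj
      refine ⟨Equiv.ofBijective π₀ hbij, mem_univ _, ?_⟩
      funext v
      show f₀ (π₀ v) = f v
      rw [hπ₀, hf₀]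
      simp only []
      rw [Equiv.symm_apply_apply]
  rw [← this, Finset.card_univ, Fintype.card_perm, Fintype.card_fin]

lemma step2 (t : ι → ℝ) (k : ℕ) :
    ∑ σ : Equiv.Perm (Fin k), (((Equiv.Perm.sign σ : ℤˣ) : ℤ) : ℝ) *
        ∑ f : Fin k → ι, ∏ v, (if f (σ v) = f v then t (f v) else 0)
      = (k.factorial : ℝ) * ∑ s ∈ powersetCard k (univ : Finset ι), ∏ j ∈ s, t j := by
  have h1 : ∀ σ : Equiv.Perm (Fin k), ∀ f : Fin k → ι,
      (∏ v, if f (σ v) = f v then t (f v) else 0)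
        = ∏ v, (Matrix.of fun u v => if f u = f v then t (f v) else 0 :
            Matrix (Fin k) (Fin k) ℝ) (σ v) v := by
    intro σ f
    exact Finset.prod_congr rfl fun v _ => rfl
  calc ∑ σ : Equiv.Perm (Fin k), (((Equiv.Perm.sign σ : ℤˣ) : ℤ) : ℝ) *
        ∑ f : Fin k → ι, ∏ v, (if f (σ v) = f v then t (f v) else 0)
      = ∑ f : Fin k → ι, ∑ σ : Equiv.Perm (Fin k), (((Equiv.Perm.sign σ : ℤˣ) : ℤ) : ℝ) *
          ∏ v, (Matrix.of fun u v => if f u = f v then t (f v) else 0 :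
            Matrix (Fin k) (Fin k) ℝ) (σ v) v := by
        rw [Finset.sum_comm]
        refine Finset.sum_congr rfl fun σ _ => ?_
        rw [Finset.mul_sum]
        exact Finset.sum_congr rfl fun f _ => by rw [h1 σ f]
    _ = ∑ f : Fin k → ι, (if Function.Injective f then ∏ v, t (f v) else 0) := by
        refine Finset.sum_congr rfl fun f _ => ?_
        rw [← det_M t f, Matrix.det_apply']
    _ = ∑ f ∈ (univ : Finset (Fin k → ι)).filter (fun f => Function.Injective f),
          ∏ v, t (f v) := by
        rw [Finset.sum_filter]
    _ = ∑ s ∈ powersetCard k (univ : Finset ι),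
          ∑ f ∈ ((univ : Finset (Fin k → ι)).filter (fun f => Function.Injective f)).filter
            (fun f => univ.image f = s), ∏ v, t (f v) := by
        refine Finset.sum_fiberwise_of_maps_to ?_ _ |>.symm
        intro f hf
        simp only [mem_filter, mem_univ, true_and] at hf
        rw [mem_powersetCard]
        exact ⟨Finset.subset_univ _, by rw [Finset.card_image_of_injective _ hf, Finset.card_univ,
          Fintype.card_fin]⟩
    _ = (k.factorial : ℝ) * ∑ s ∈ powersetCard k (univ : Finset ι), ∏ j ∈ s, t j := by
        rw [Finset.mul_sum]
        refine Finset.sum_congr rfl fun s hs => ?_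
        have hterm : ∀ f ∈ ((univ : Finset (Fin k → ι)).filter
            (fun f => Function.Injective f)).filter (fun f => univ.image f = s),
            (∏ v, t (f v)) = ∏ j ∈ s, t j := by
          intro f hf
          simp only [mem_filter, mem_univ, true_and] at hf
          obtain ⟨hinj, him⟩ := hf
          rw [← him, Finset.prod_image (fun u _ v _ h => hinj h)]
        rw [Finset.sum_congr rfl hterm, Finset.sum_const, card_fiber hs, nsmul_eq_mul]

lemma L2 (k : ℕ) (u : ι → ℝ) :
    ∑ σ : Equiv.Perm (Fin k), ∏ r ∈ Icc 1 k, (-∑ j : ι, ((u j) ^ r)⁻¹) ^ cycleCount r σ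
      = (k.factorial : ℝ) *
          ∑ s ∈ powersetCard k (univ : Finset ι), ∏ j ∈ s, (-(u j))⁻¹ := by
  set t : ι → ℝ := fun j => (-(u j))⁻¹ with ht
  have hS : ∀ r : ℕ, 1 ≤ r →
      (-∑ j : ι, ((u j) ^ r)⁻¹) = (-1 : ℝ) ^ (r + 1) * ∑ j : ι, t j ^ r := by
    intro r _
    have hpt : ∀ j : ι, t j ^ r = (-1 : ℝ) ^ r * ((u j) ^ r)⁻¹ := by
      intro j
      rw [ht]
      simp only []
      rw [inv_neg, neg_eq_neg_one_mul, mul_pow, inv_pow]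
    rw [Finset.sum_congr rfl fun j _ => hpt j, ← Finset.mul_sum, ← mul_assoc, ← pow_add]
    have h2 : (-1 : ℝ) ^ (r + 1 + r) = -1 := by
      have : r + 1 + r = 2 * r + 1 := by omega
      rw [this, pow_succ, pow_mul]
      norm_num
    rw [h2, neg_one_mul]
  have hW : ∀ σ : Equiv.Perm (Fin k),
      ∏ r ∈ Icc 1 k, (-∑ j : ι, ((u j) ^ r)⁻¹) ^ cycleCount r σ
        = (((Equiv.Perm.sign σ : ℤˣ) : ℤ) : ℝ) *
            ∑ f : Fin k → ι, ∏ v, (if f (σ v) = f v then t (f v) else 0) := by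
    intro σ
    calc ∏ r ∈ Icc 1 k, (-∑ j : ι, ((u j) ^ r)⁻¹) ^ cycleCount r σ
        = ∏ r ∈ Icc 1 k, ((-1 : ℝ) ^ (r + 1) * ∑ j : ι, t j ^ r) ^ cycleCount r σ :=
          Finset.prod_congr rfl fun r hr => by rw [hS r (mem_Icc.1 hr).1]
      _ = (∏ r ∈ Icc 1 k, ((-1 : ℝ) ^ (r + 1)) ^ cycleCount r σ) *
            ∏ r ∈ Icc 1 k, (∑ j : ι, t j ^ r) ^ cycleCount r σ := by
          rw [← Finset.prod_mul_distrib]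
          exact Finset.prod_congr rfl fun r _ => mul_pow _ _ _
      _ = (-1 : ℝ) ^ (k + (orbs σ).card) *
            ∑ f : Fin k → ι, ∏ v, (if f (σ v) = f v then t (f v) else 0) := by
          congr 1
          · rw [show (∏ r ∈ Icc 1 k, ((-1 : ℝ) ^ (r + 1)) ^ cycleCount r σ)
                  = ∏ r ∈ Icc 1 k, (-1 : ℝ) ^ ((r + 1) * cycleCount r σ) from
                Finset.prod_congr rfl fun r _ => (pow_mul _ _ _).symm,
              Finset.prod_pow_eq_pow_sum]
            congr 1
            have hsplit : ∑ i ∈ Icc 1 k, (i + 1) * cycleCount i σ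
                = (∑ i ∈ Icc 1 k, i * cycleCount i σ) + ∑ i ∈ Icc 1 k, cycleCount i σ := by
              rw [← Finset.sum_add_distrib]
              exact Finset.sum_congr rfl fun r _ => by ring
            rw [hsplit, sum_mul_N σ, sum_N σ]
          · rw [prod_orbs σ (fun r => ∑ j : ι, t j ^ r), step1 σ t]
      _ = (((Equiv.Perm.sign σ : ℤˣ) : ℤ) : ℝ) *
            ∑ f : Fin k → ι, ∏ v, (if f (σ v) = f v then t (f v) else 0) := by
          rw [sign_eq σ]
  rw [Finset.sum_congr rfl fun σ _ => hW σ]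
  exact step2 t k


end Func

lemma iteratedDeriv_polyeval (p : Polynomial ℝ) (k : ℕ) :
    iteratedDeriv k (fun t => p.eval t) = fun x => (Polynomial.derivative^[k] p).eval x := by
  induction k with
  | zero => simp
  | succ k ih =>
    rw [iteratedDeriv_succ, ih]
    funext x
    rw [Function.iterate_succ_apply']
    exact Polynomial.deriv _

lemma L1 {m : Type} [DecidableEq m] (J : Finset m) (b : m → ℝ) (c : ℝ) (k : ℕ) (x : ℝ)
    (hx : ∀ j ∈ J, x ≠ b j) :
    (k.factorial : ℝ)⁻¹ * iteratedDeriv k (fun t => c * ∏ j ∈ J, (t - b j)) x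
      = (c * ∏ j ∈ J, (x - b j)) * ∑ s ∈ powersetCard k J, ∏ j ∈ s, (x - b j)⁻¹ := by
  set Q : Polynomial ℝ := ∏ j ∈ J, (Polynomial.X - Polynomial.C (b j)) with hQ
  set P : Polynomial ℝ := Polynomial.C c * Q with hP
  have hfun : (fun t : ℝ => c * ∏ j ∈ J, (t - b j)) = fun t => P.eval t := by
    funext t
    simp [hP, hQ, Polynomial.eval_prod]
  rw [hfun, iteratedDeriv_polyeval]
  rcases lt_or_ge J.card k with hk | hk
  · -- degenerate case k > #J
    have hdeg : P.natDegree < k := by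
      have h1 : Q.natDegree ≤ J.card := by
        refine le_trans (Polynomial.natDegree_prod_le J _) ?_
        have hd : ∀ j ∈ J, (Polynomial.X - Polynomial.C (b j)).natDegree ≤ 1 :=
          fun j _ => le_of_eq (Polynomial.natDegree_X_sub_C (b j))
        calc ∑ j ∈ J, (Polynomial.X - Polynomial.C (b j)).natDegree
            ≤ ∑ _j ∈ J, 1 := Finset.sum_le_sum (f := fun j => (Polynomial.X - Polynomial.C (b j)).natDegree) (g := fun _ => 1) hd
          _ = J.card := by simp
      exact lt_of_le_of_lt (le_trans (Polynomial.natDegree_C_mul_le c Q) h1) hk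
    rw [Polynomial.iterate_derivative_eq_zero hdeg]
    rw [Finset.powersetCard_eq_empty.2 hk]
    simp
  · -- main case k ≤ #J
    have h2 : Polynomial.derivative^[k] P = k.factorial • Polynomial.hasseDeriv k P := by
      rw [← Polynomial.factorial_smul_hasseDeriv k]
      rfl
    rw [h2]
    beta_reduce
    rw [Polynomial.eval_smul, nsmul_eq_mul, ← mul_assoc,
      inv_mul_cancel₀ (by exact_mod_cast Nat.factorial_ne_zero k), one_mul]
    have h3 : Polynomial.hasseDeriv k P = Polynomial.C c * Polynomial.hasseDeriv k Q := by
      rw [hP, ← Polynomial.smul_eq_C_mul, ← Polynomial.smul_eq_C_mul, map_smul]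
    rw [h3, Polynomial.eval_mul, Polynomial.eval_C]
    have h4 : (Polynomial.hasseDeriv k Q).eval x = (Polynomial.taylor x Q).coeff k :=
      (Polynomial.taylor_coeff x Q k).symm
    have h5 : Polynomial.taylor x Q = ∏ j ∈ J, (Polynomial.X + Polynomial.C (x - b j)) := by
      rw [Polynomial.taylor_apply, hQ, Polynomial.prod_comp]
      refine Finset.prod_congr rfl fun j _ => ?_
      rw [Polynomial.sub_comp, Polynomial.X_comp, Polynomial.C_comp]
      rw [add_sub_assoc, ← Polynomial.C_sub]
    have h6 : (Polynomial.taylor x Q).coeff k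
        = ∑ u ∈ powersetCard (J.card - k) J, ∏ j ∈ u, (x - b j) := by
      rw [h5]
      exact Finset.prod_X_add_C_coeff J _ hk
    rw [h4, h6]
    -- complement bijection
    have hne : ∀ j ∈ J, x - b j ≠ 0 := fun j hj => sub_ne_zero.2 (hx j hj)
    have h7 : ∑ u ∈ powersetCard (J.card - k) J, ∏ j ∈ u, (x - b j)
        = ∑ s ∈ powersetCard k J, (∏ j ∈ J, (x - b j)) * ∏ j ∈ s, (x - b j)⁻¹ := by
      refine Finset.sum_nbij' (fun u => J \ u) (fun s => J \ s) ?_ ?_ ?_ ?_ ?_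
      · intro u hu
        rw [mem_powersetCard] at hu ⊢
        exact ⟨Finset.sdiff_subset, by rw [Finset.card_sdiff_of_subset hu.1, hu.2]; omega⟩
      · intro s hs
        rw [mem_powersetCard] at hs ⊢
        exact ⟨Finset.sdiff_subset, by rw [Finset.card_sdiff_of_subset hs.1, hs.2]⟩
      · intro u hu
        rw [mem_powersetCard] at hu
        exact Finset.sdiff_sdiff_eq_self hu.1
      · intro s hs
        rw [mem_powersetCard] at hs
        exact Finset.sdiff_sdiff_eq_self hs.1
      · intro u hu
        rw [mem_powersetCard] at hu
        have hsub : J \ u ⊆ J := Finset.sdiff_subset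
        have hprod : (∏ j ∈ J \ u, (x - b j)) * ∏ j ∈ u, (x - b j) = ∏ j ∈ J, (x - b j) :=
          Finset.prod_sdiff hu.1
        have hA : (∏ j ∈ J \ u, (x - b j)) ≠ 0 :=
          Finset.prod_ne_zero_iff.2 fun j hj => hne j (hsub hj)
        rw [Finset.prod_inv_distrib, eq_comm, mul_inv_eq_iff_eq_mul₀ hA, ← hprod, mul_comm]
    rw [h7, ← Finset.mul_sum, ← mul_assoc]
lemma powersetCard_subtype {m : Type} [DecidableEq m] (J : Finset m) (g : m → ℝ) (k : ℕ) :
    ∑ s ∈ powersetCard k (univ : Finset {j // j ∈ J}), ∏ j ∈ s, g j.1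
      = ∑ s ∈ powersetCard k J, ∏ j ∈ s, g j := by
  refine Finset.sum_nbij' (i := fun s => s.map (Function.Embedding.subtype _))
    (j := fun s => univ.filter (fun j : {j // j ∈ J} => j.1 ∈ s)) ?_ ?_ ?_ ?_ ?_
  · intro s hs
    rw [mem_powersetCard] at hs ⊢
    constructor
    · intro j hj
      rw [Finset.mem_map] at hj
      obtain ⟨y, -, rfl⟩ := hj
      exact y.2
    · rw [Finset.card_map, hs.2]
  · intro s hs
    rw [mem_powersetCard] at hs ⊢
    refine ⟨Finset.subset_univ _, ?_⟩
    rw [← hs.2]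
    refine Finset.card_bij (fun j _ => j.1) ?_ ?_ ?_
    · intro j hj
      exact (Finset.mem_filter.1 hj).2
    · intro j hj j' hj' h
      exact Subtype.ext h
    · intro j hj
      exact ⟨⟨j, hs.1 hj⟩, Finset.mem_filter.2 ⟨mem_univ _, hj⟩, rfl⟩
  · intro s _
    ext j
    simp only [Finset.mem_filter, mem_univ, true_and, Finset.mem_map,
      Function.Embedding.coe_subtype]
    exact ⟨fun ⟨y, hy, he⟩ => by rwa [← Subtype.ext he], fun h => ⟨j, h, rfl⟩⟩
  · intro s hs
    rw [mem_powersetCard] at hs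
    ext j
    simp only [Finset.mem_map, Finset.mem_filter, mem_univ, true_and,
      Function.Embedding.coe_subtype]
    exact ⟨fun ⟨y, hy, he⟩ => he ▸ hy, fun h => ⟨⟨j, hs.1 h⟩, h, rfl⟩⟩
  · intro s _
    exact (Finset.prod_map s (Function.Embedding.subtype _) g).symm


end Aux

/-- For distinct nodes `a_0,…,a_n`, the Lagrange fundamental polynomial
`l_i(x) = ∏_{j≠i} (x-a_j)/(a_i-a_j)` satisfies, for `k ≥ 0` and `x ≠ a_j` (`j ≠ i`),
`(1/k!) l_i^{(k)}(x) = l_i(x) · Z_k(-S_{1,i}(x),…,-S_{k,i}(x))` with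
`S_{r,i}(x) = ∑_{j≠i} (a_j - x)^{-r}`. -/
theorem iteratedDeriv_lagrange_cycleIndex (n : ℕ) (a : Fin (n + 1) → ℝ)
    (ha : Function.Injective a) (i : Fin (n + 1)) (k : ℕ) (x : ℝ)
    (hx : ∀ j ∈ Finset.univ.erase i, x ≠ a j) :
    (k.factorial : ℝ)⁻¹ *
        iteratedDeriv k
          (fun t => ∏ j ∈ Finset.univ.erase i, (t - a j) / (a i - a j)) x =
      (∏ j ∈ Finset.univ.erase i, (x - a j) / (a i - a j)) *
        cycleIndex k
          (fun r => -∑ j ∈ Finset.univ.erase i, ((a j - x) ^ r)⁻¹) := by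
  set J : Finset (Fin (n + 1)) := Finset.univ.erase i with hJ
  set c : ℝ := ∏ j ∈ J, (a i - a j)⁻¹ with hc
  have hsplit : ∀ t : ℝ, ∏ j ∈ J, (t - a j) / (a i - a j) = c * ∏ j ∈ J, (t - a j) := by
    intro t
    rw [hc, ← Finset.prod_mul_distrib]
    exact Finset.prod_congr rfl fun j _ => by rw [div_eq_mul_inv, mul_comm]
  have hfun : (fun t : ℝ => ∏ j ∈ J, (t - a j) / (a i - a j))
      = fun t => c * ∏ j ∈ J, (t - a j) := funext hsplit
  rw [hfun, Aux.L1 J a c k x hx, hsplit x]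
  congr 1
  -- goal: ∑ s ∈ powersetCard k J, ∏ j ∈ s, (x - a j)⁻¹ = cycleIndex k (...)
  rw [cycleIndex]
  set u : {j // j ∈ J} → ℝ := fun j => a j.1 - x with hu
  have hW : ∀ r : ℕ, (-∑ j ∈ J, ((a j - x) ^ r)⁻¹) = -∑ j : {j // j ∈ J}, ((u j) ^ r)⁻¹ := by
    intro r
    congr 1
    exact (Finset.sum_coe_sort J (fun j => ((a j - x) ^ r)⁻¹)).symm
  have hsum : ∑ σ : Equiv.Perm (Fin k),
      ∏ r ∈ Icc 1 k, (-∑ j ∈ J, ((a j - x) ^ r)⁻¹) ^ cycleCount r σ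
      = (k.factorial : ℝ) *
          ∑ s ∈ powersetCard k (univ : Finset {j // j ∈ J}), ∏ j ∈ s, (-(u j))⁻¹ := by
    rw [← Aux.L2 k u]
    exact Finset.sum_congr rfl fun σ _ => Finset.prod_congr rfl fun r _ => by rw [hW r]
  rw [hsum, ← mul_assoc, inv_mul_cancel₀ (by exact_mod_cast Nat.factorial_ne_zero k), one_mul]
  have : ∀ j : {j // j ∈ J}, (-(u j))⁻¹ = (x - a j.1)⁻¹ := by
    intro j
    rw [hu]
    congr 1
    ring
  rw [Finset.sum_congr rfl fun s _ => Finset.prod_congr rfl fun j _ => this j]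
  exact (Aux.powersetCard_subtype J (fun j => (x - a j)⁻¹) k).symm
end

section
/- Let h > 0, ν and n be integers with 1 ≤ ν and 2ν ≤ n, and define interpolation nodes a_0 = ξ, a_{2j−1} = ξ + jh and a_{2j} = ξ − jh for 1 ≤ j ≤ ν, and a_{ν+j} = ξ − jh for ν+1 ≤ j ≤ n−ν. Then for 1 ≤ i ≤ ν, the derivative of the Lagrange fundamental polynomial l_{2i−1} at ξ equals l_{2i−1}'(ξ) = (−1)^{i−1} ν! (n−ν)! / ( i h (ν−i)! (n−ν+i)! ). -/
open Finset


open Finset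

lemma factShift (c : ℕ) : ∀ d : ℕ, c.factorial * ∏ m ∈ Icc 1 d, (c + m) = (c + d).factorial
  | 0 => by simp
  | d + 1 => by
    rw [Finset.prod_Icc_succ_top (by omega), ← mul_assoc, factShift c d,
      show c + (d + 1) = (c + d) + 1 by ring, Nat.factorial_succ, mul_comm]

lemma prodIccCast (d : ℕ) : (∏ m ∈ Icc 1 d, (m : ℝ)) = d.factorial := by
  rw [← Nat.cast_prod]
  norm_cast
  rw [← Finset.Ico_add_one_right_eq_Icc, Finset.prod_Ico_id_eq_factorial]

lemma prodMulH (h : ℝ) (d : ℕ) :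
    (∏ m ∈ Icc 1 d, ((m : ℝ) * h)) = d.factorial * h ^ d := by
  rw [Finset.prod_mul_distrib, prodIccCast, Finset.prod_const, Nat.card_Icc]
  norm_num

lemma prodNegMulH (h : ℝ) (d : ℕ) :
    (∏ m ∈ Icc 1 d, (-((m : ℝ) * h))) = (-1) ^ d * d.factorial * h ^ d := by
  have : ∀ m : ℕ, -((m:ℝ) * h) = (-1) * ((m:ℝ) * h) := fun m => by ring
  simp only [this]
  rw [Finset.prod_mul_distrib, prodMulH, Finset.prod_const, Nat.card_Icc]
  norm_num
  ring

lemma prodShiftH (h : ℝ) (c d : ℕ) :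
    (∏ m ∈ Icc 1 d, (((c : ℝ) + m) * h)) =
      ((c + d).factorial / c.factorial : ℝ) * h ^ d := by
  rw [Finset.prod_mul_distrib, Finset.prod_const, Nat.card_Icc]
  have : (∏ m ∈ Icc 1 d, ((c : ℝ) + m)) = ((c + d).factorial / c.factorial : ℝ) := by
    rw [eq_div_iff (by positivity), mul_comm]
    have := factShift c d
    push_cast [← this]
    ring
  rw [this]; norm_num


lemma prodNegShiftH (h : ℝ) (c d : ℕ) :
    (∏ m ∈ Icc 1 d, (-(((c : ℝ) + m) * h))) =
      (-1) ^ d * (((c + d).factorial : ℝ) / c.factorial) * h ^ d := by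
  have hneg : ∀ m : ℕ, -(((c : ℝ) + m) * h) = (-1) * (((c : ℝ) + m) * h) := fun m => by ring
  simp only [hneg]
  rw [Finset.prod_mul_distrib, prodShiftH, Finset.prod_const, Nat.card_Icc]
  norm_num
  ring

/-- With the equidistant nodes `a_0 = ξ`, `a_{2j-1} = ξ + jh`, `a_{2j} = ξ - jh`
for `1 ≤ j ≤ ν`, and `a_{ν+j} = ξ - jh` for `ν+1 ≤ j ≤ n-ν`, the Lagrange
fundamental polynomial at the node `a_{2i-1} = ξ + ih` (for `1 ≤ i ≤ ν`) satisfies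
`l_{2i-1}'(ξ) = (-1)^{i-1} ν! (n-ν)! / (i h (ν-i)! (n-ν+i)!)`. -/
theorem deriv_lagrange_equidistant (ξ h : ℝ) (hh : 0 < h) (n ν : ℕ)
    (hν : 1 ≤ ν) (hνn : 2 * ν ≤ n) (a : ℕ → ℝ)
    (ha0 : a 0 = ξ)
    (haodd : ∀ j, 1 ≤ j → j ≤ ν → a (2 * j - 1) = ξ + j * h)
    (haeven : ∀ j, 1 ≤ j → j ≤ ν → a (2 * j) = ξ - j * h)
    (hatail : ∀ j, ν + 1 ≤ j → j ≤ n - ν → a (ν + j) = ξ - j * h)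
    (i : ℕ) (hi1 : 1 ≤ i) (hiν : i ≤ ν) :
    deriv
        (fun x => ∏ j ∈ (Finset.range (n + 1)).erase (2 * i - 1),
          (x - a j) / (a (2 * i - 1) - a j)) ξ =
      (-1) ^ (i - 1) * (ν.factorial : ℝ) * ((n - ν).factorial : ℝ) /
        ((i : ℝ) * h * ((ν - i).factorial : ℝ) * ((n - ν + i).factorial : ℝ)) := by
  classical
  set S : Finset ℕ := (Finset.range (n + 1)).erase (2 * i - 1) with hSdef
  have h0S : 0 ∈ S := by
    simp only [hSdef, Finset.mem_erase, Finset.mem_range]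
    omega
  have ham : a (2 * i - 1) = ξ + i * h := haodd i hi1 hiν
  set C : ℝ := ∏ j ∈ S, (a (2 * i - 1) - a j) with hCdef
  -- Step 1: the derivative equals (∏_{j ∈ S \ {0}} (ξ - a j)) / C
  have hstep1 : deriv (fun x => ∏ j ∈ S, (x - a j) / (a (2 * i - 1) - a j)) ξ
      = (∏ j ∈ S.erase 0, (ξ - a j)) / C := by
    have hfun : (fun x => ∏ j ∈ S, (x - a j) / (a (2 * i - 1) - a j))
        = fun x => (∏ j ∈ S, (x - a j)) / C := by
      funext x
      rw [hCdef, Finset.prod_div_distrib]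
    have hder : HasDerivAt (fun x => ∏ j ∈ S, (x - a j))
        (∑ k ∈ S, (∏ j ∈ S.erase k, (ξ - a j)) • (1 : ℝ)) ξ :=
      HasDerivAt.fun_finsetProd (fun j _ => (hasDerivAt_id ξ).sub_const (a j))
    have hsum : (∑ k ∈ S, (∏ j ∈ S.erase k, (ξ - a j)) • (1 : ℝ))
        = ∏ j ∈ S.erase 0, (ξ - a j) := by
      rw [Finset.sum_eq_single_of_mem 0 h0S]
      · simp
      · intro k hk hk0
        have h0' : 0 ∈ S.erase k := Finset.mem_erase.2 ⟨Ne.symm hk0, h0S⟩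
        rw [Finset.prod_eq_zero h0' (by rw [ha0]; ring)]
        simp
    rw [hfun, (hder.div_const C).deriv, hsum]
  rw [hstep1]
  -- Step 2: the index set partition
  have hsets : S.erase 0 = ((((Icc 1 ν).erase i).image (fun k => 2 * k - 1)) ∪
      ((Icc 1 ν).image (fun k => 2 * k))) ∪ (Icc (2 * ν + 1) n) := by
    ext j
    simp only [hSdef, Finset.mem_erase, Finset.mem_range, Finset.mem_union,
      Finset.mem_image, Finset.mem_Icc]
    constructor
    · rintro ⟨hj0, hjm, hjn⟩
      by_cases hle : j ≤ 2 * ν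
      · rcases Nat.even_or_odd j with ⟨k, hk⟩ | ⟨k, hk⟩
        · exact Or.inl (Or.inr ⟨k, by omega, by omega⟩)
        · exact Or.inl (Or.inl ⟨k + 1, by omega, by omega⟩)
      · exact Or.inr (by omega)
    · rintro ((⟨k, ⟨hki, hk1, hkν⟩, rfl⟩ | ⟨k, ⟨hk1, hkν⟩, rfl⟩) | ⟨hj1, hjn⟩) <;>
        refine ⟨by omega, by omega, by omega⟩
  have hd1 : Disjoint (((Icc 1 ν).erase i).image (fun k => 2 * k - 1))
      ((Icc 1 ν).image (fun k => 2 * k)) := by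
    rw [Finset.disjoint_left]
    rintro x hx hx'
    simp only [Finset.mem_image, Finset.mem_erase, Finset.mem_Icc] at hx hx'
    obtain ⟨k, ⟨hki, hk1, hkν⟩, rfl⟩ := hx
    obtain ⟨l, ⟨hl1, hlν⟩, hlx⟩ := hx'
    omega
  have hd2 : Disjoint ((((Icc 1 ν).erase i).image (fun k => 2 * k - 1)) ∪
      ((Icc 1 ν).image (fun k => 2 * k))) (Icc (2 * ν + 1) n) := by
    rw [Finset.disjoint_left]
    rintro x hx hx'
    simp only [Finset.mem_union, Finset.mem_image, Finset.mem_erase, Finset.mem_Icc] at hx hx'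
    rcases hx with ⟨k, ⟨hki, hk1, hkν⟩, rfl⟩ | ⟨k, ⟨hk1, hkν⟩, rfl⟩ <;> omega
  have key : ∀ f : ℕ → ℝ, (∏ j ∈ S.erase 0, f j) =
      ((∏ k ∈ (Icc 1 ν).erase i, f (2 * k - 1)) * (∏ k ∈ Icc 1 ν, f (2 * k))) *
        (∏ j ∈ Icc (2 * ν + 1) n, f j) := by
    intro f
    rw [hsets, Finset.prod_union hd2, Finset.prod_union hd1,
      Finset.prod_image (by
        intro x hx y hy hxy
        simp only [Finset.mem_coe, Finset.mem_erase, Finset.mem_Icc] at hx hy hxy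
        omega),
      Finset.prod_image (by
        intro x hx y hy hxy
        simp only [Finset.mem_coe, Finset.mem_Icc] at hx hy hxy
        omega)]
  -- Step 3: reindexing helpers
  have tailprod : ∀ g : ℕ → ℝ, (∏ j ∈ Icc (2 * ν + 1) n, g (j - ν))
      = ∏ m ∈ Icc (ν + 1) (n - ν), g m := by
    intro g
    refine Finset.prod_nbij' (fun j => j - ν) (fun m => m + ν) ?_ ?_ ?_ ?_ ?_ <;>
      intro x hx <;> simp only [Finset.mem_Icc] at hx ⊢ <;> omega
  have merge : ∀ g : ℕ → ℝ, (∏ m ∈ Icc 1 ν, g m) * (∏ m ∈ Icc (ν + 1) (n - ν), g m)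
      = ∏ m ∈ Icc 1 (n - ν), g m := by
    intro g
    rw [show Icc 1 ν = Ioc 0 ν from by ext x; simp [Finset.mem_Icc, Finset.mem_Ioc]; omega,
      show Icc (ν + 1) (n - ν) = Ioc ν (n - ν) from by
        ext x; simp [Finset.mem_Icc, Finset.mem_Ioc],
      show Icc 1 (n - ν) = Ioc 0 (n - ν) from by
        ext x; simp [Finset.mem_Icc, Finset.mem_Ioc]; omega]
    exact Finset.prod_Ioc_consecutive g (by omega) (by omega)
  have hsplit : ∀ g : ℕ → ℝ, (∏ k ∈ (Icc 1 ν).erase i, g k)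
      = (∏ k ∈ Icc 1 (i - 1), g k) * (∏ k ∈ Icc (i + 1) ν, g k) := by
    intro g
    have hset : (Icc 1 ν).erase i = Icc 1 (i - 1) ∪ Icc (i + 1) ν := by
      ext k
      simp only [Finset.mem_erase, Finset.mem_Icc, Finset.mem_union]
      omega
    have hdisj : Disjoint (Icc 1 (i - 1)) (Icc (i + 1) ν) := by
      rw [Finset.disjoint_left]
      intro x hx hx'
      simp only [Finset.mem_Icc] at hx hx'
      omega
    rw [hset, Finset.prod_union hdisj]
  have hhigh : ∀ g : ℕ → ℝ, (∏ k ∈ Icc (i + 1) ν, g (k - i)) = ∏ m ∈ Icc 1 (ν - i), g m := by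
    intro g
    refine Finset.prod_nbij' (fun k => k - i) (fun m => m + i) ?_ ?_ ?_ ?_ ?_ <;>
      intro x hx <;> simp only [Finset.mem_Icc] at hx ⊢ <;> omega
  -- Step 4: compute the numerator N
  have hNval : (∏ j ∈ S.erase 0, (ξ - a j)) =
      ((-1) ^ (i - 1) * (i - 1).factorial * h ^ (i - 1)) *
        ((-1) ^ (ν - i) * ((ν.factorial : ℝ) / i.factorial) * h ^ (ν - i)) *
        (((n - ν).factorial : ℝ) * h ^ (n - ν)) := by
    rw [key]
    have hOval : (∏ k ∈ (Icc 1 ν).erase i, (ξ - a (2 * k - 1)))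
        = ((-1) ^ (i - 1) * (i - 1).factorial * h ^ (i - 1)) *
          ((-1) ^ (ν - i) * ((ν.factorial : ℝ) / i.factorial) * h ^ (ν - i)) := by
      have h1 : (∏ k ∈ (Icc 1 ν).erase i, (ξ - a (2 * k - 1)))
          = ∏ k ∈ (Icc 1 ν).erase i, (-((k : ℝ) * h)) :=
        Finset.prod_congr rfl (fun k hk => by
          simp only [Finset.mem_erase, Finset.mem_Icc] at hk
          rw [haodd k hk.2.1 hk.2.2]; ring)
      rw [h1, hsplit]
      congr 1
      · exact prodNegMulH h (i - 1)
      · calc (∏ k ∈ Icc (i + 1) ν, (-((k : ℝ) * h)))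
            = ∏ k ∈ Icc (i + 1) ν, (-(((i : ℝ) + ((k - i : ℕ) : ℝ)) * h)) :=
              Finset.prod_congr rfl (fun k hk => by
                simp only [Finset.mem_Icc] at hk
                rw [Nat.cast_sub (by omega : i ≤ k)]; ring)
          _ = ∏ m ∈ Icc 1 (ν - i), (-(((i : ℝ) + m) * h)) := by
              refine Finset.prod_nbij' (fun k => k - i) (fun m => m + i) ?_ ?_ ?_ ?_
                (fun k hk => rfl) <;>
                intro x hx <;> simp only [Finset.mem_Icc] at hx ⊢ <;> omega
          _ = (-1) ^ (ν - i) * (((i + (ν - i)).factorial : ℝ) / i.factorial) * h ^ (ν - i) :=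
              prodNegShiftH h i (ν - i)
          _ = (-1) ^ (ν - i) * ((ν.factorial : ℝ) / i.factorial) * h ^ (ν - i) := by
              rw [show i + (ν - i) = ν by omega]
    have hET : (∏ k ∈ Icc 1 ν, (ξ - a (2 * k))) * (∏ j ∈ Icc (2 * ν + 1) n, (ξ - a j))
        = ((n - ν).factorial : ℝ) * h ^ (n - ν) := by
      have hE : (∏ k ∈ Icc 1 ν, (ξ - a (2 * k))) = ∏ k ∈ Icc 1 ν, ((k : ℝ) * h) :=
        Finset.prod_congr rfl (fun k hk => by
          simp only [Finset.mem_Icc] at hk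
          rw [haeven k hk.1 hk.2]; ring)
      have hT : (∏ j ∈ Icc (2 * ν + 1) n, (ξ - a j))
          = ∏ m ∈ Icc (ν + 1) (n - ν), ((m : ℝ) * h) := by
        calc (∏ j ∈ Icc (2 * ν + 1) n, (ξ - a j))
            = ∏ j ∈ Icc (2 * ν + 1) n, (((j - ν : ℕ) : ℝ) * h) :=
              Finset.prod_congr rfl (fun j hj => by
                simp only [Finset.mem_Icc] at hj
                have hja := hatail (j - ν) (by omega) (by omega)
                rw [show ν + (j - ν) = j by omega] at hja
                rw [hja]; ring)
          _ = ∏ m ∈ Icc (ν + 1) (n - ν), ((m : ℝ) * h) := by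
              refine Finset.prod_nbij' (fun j => j - ν) (fun m => m + ν) ?_ ?_ ?_ ?_
                (fun j hj => rfl) <;>
                intro x hx <;> simp only [Finset.mem_Icc] at hx ⊢ <;> omega
      rw [hE, hT, merge (fun m => (m : ℝ) * h), prodMulH]
    calc (∏ k ∈ (Icc 1 ν).erase i, (ξ - a (2 * k - 1))) * (∏ k ∈ Icc 1 ν, (ξ - a (2 * k))) *
          (∏ j ∈ Icc (2 * ν + 1) n, (ξ - a j))
        = (∏ k ∈ (Icc 1 ν).erase i, (ξ - a (2 * k - 1))) *
            ((∏ k ∈ Icc 1 ν, (ξ - a (2 * k))) * (∏ j ∈ Icc (2 * ν + 1) n, (ξ - a j))) := by ring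
      _ = _ := by rw [hOval, hET]
  -- Step 5: compute the denominator C
  have hCval : C = ((i : ℝ) * h) *
      (((i - 1).factorial * h ^ (i - 1)) *
        ((-1) ^ (ν - i) * ((ν - i).factorial : ℝ) * h ^ (ν - i))) *
      ((((n - ν + i).factorial : ℝ) / i.factorial) * h ^ (n - ν)) := by
    rw [hCdef, ← Finset.mul_prod_erase S _ h0S, key, ha0, ham]
    have hOval : (∏ k ∈ (Icc 1 ν).erase i, (ξ + (i : ℝ) * h - a (2 * k - 1)))
        = ((i - 1).factorial * h ^ (i - 1)) *
          ((-1) ^ (ν - i) * ((ν - i).factorial : ℝ) * h ^ (ν - i)) := by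
      rw [hsplit]
      congr 1
      · calc (∏ k ∈ Icc 1 (i - 1), (ξ + (i : ℝ) * h - a (2 * k - 1)))
            = ∏ k ∈ Icc 1 (i - 1), (((i - k : ℕ) : ℝ) * h) :=
              Finset.prod_congr rfl (fun k hk => by
                simp only [Finset.mem_Icc] at hk
                rw [haodd k hk.1 (by omega), Nat.cast_sub (by omega : k ≤ i)]; ring)
          _ = ∏ m ∈ Icc 1 (i - 1), ((m : ℝ) * h) := by
              refine Finset.prod_nbij' (fun k => i - k) (fun m => i - m) ?_ ?_ ?_ ?_
                (fun k hk => rfl) <;>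
                intro x hx <;> simp only [Finset.mem_Icc] at hx ⊢ <;> omega
          _ = ((i - 1).factorial : ℝ) * h ^ (i - 1) := prodMulH h (i - 1)
      · calc (∏ k ∈ Icc (i + 1) ν, (ξ + (i : ℝ) * h - a (2 * k - 1)))
            = ∏ k ∈ Icc (i + 1) ν, (-(((k - i : ℕ) : ℝ) * h)) :=
              Finset.prod_congr rfl (fun k hk => by
                simp only [Finset.mem_Icc] at hk
                rw [haodd k (by omega) hk.2, Nat.cast_sub (by omega : i ≤ k)]; ring)
          _ = ∏ m ∈ Icc 1 (ν - i), (-((m : ℝ) * h)) := by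
              refine Finset.prod_nbij' (fun k => k - i) (fun m => m + i) ?_ ?_ ?_ ?_
                (fun k hk => rfl) <;>
                intro x hx <;> simp only [Finset.mem_Icc] at hx ⊢ <;> omega
          _ = (-1) ^ (ν - i) * ((ν - i).factorial : ℝ) * h ^ (ν - i) := prodNegMulH h (ν - i)
    have hET : (∏ k ∈ Icc 1 ν, (ξ + (i : ℝ) * h - a (2 * k))) *
          (∏ j ∈ Icc (2 * ν + 1) n, (ξ + (i : ℝ) * h - a j))
        = (((n - ν + i).factorial : ℝ) / i.factorial) * h ^ (n - ν) := by
      have hE : (∏ k ∈ Icc 1 ν, (ξ + (i : ℝ) * h - a (2 * k)))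
          = ∏ k ∈ Icc 1 ν, (((i : ℝ) + k) * h) :=
        Finset.prod_congr rfl (fun k hk => by
          simp only [Finset.mem_Icc] at hk
          rw [haeven k hk.1 hk.2]; ring)
      have hT : (∏ j ∈ Icc (2 * ν + 1) n, (ξ + (i : ℝ) * h - a j))
          = ∏ m ∈ Icc (ν + 1) (n - ν), (((i : ℝ) + m) * h) := by
        calc (∏ j ∈ Icc (2 * ν + 1) n, (ξ + (i : ℝ) * h - a j))
            = ∏ j ∈ Icc (2 * ν + 1) n, (((i : ℝ) + ((j - ν : ℕ) : ℝ)) * h) :=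
              Finset.prod_congr rfl (fun j hj => by
                simp only [Finset.mem_Icc] at hj
                have hja := hatail (j - ν) (by omega) (by omega)
                rw [show ν + (j - ν) = j by omega] at hja
                rw [hja]; ring)
          _ = ∏ m ∈ Icc (ν + 1) (n - ν), (((i : ℝ) + m) * h) := by
              refine Finset.prod_nbij' (fun j => j - ν) (fun m => m + ν) ?_ ?_ ?_ ?_
                (fun j hj => rfl) <;>
                intro x hx <;> simp only [Finset.mem_Icc] at hx ⊢ <;> omega
      rw [hE, hT, merge (fun m => ((i : ℝ) + m) * h), prodShiftH,
        show i + (n - ν) = n - ν + i by omega]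
    calc (ξ + (i : ℝ) * h - ξ) *
          ((∏ k ∈ (Icc 1 ν).erase i, (ξ + (i : ℝ) * h - a (2 * k - 1))) *
            (∏ k ∈ Icc 1 ν, (ξ + (i : ℝ) * h - a (2 * k))) *
          (∏ j ∈ Icc (2 * ν + 1) n, (ξ + (i : ℝ) * h - a j)))
        = (ξ + (i : ℝ) * h - ξ) *
            ((∏ k ∈ (Icc 1 ν).erase i, (ξ + (i : ℝ) * h - a (2 * k - 1))) *
            ((∏ k ∈ Icc 1 ν, (ξ + (i : ℝ) * h - a (2 * k))) *
              (∏ j ∈ Icc (2 * ν + 1) n, (ξ + (i : ℝ) * h - a j)))) := by ring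
      _ = _ := by rw [hOval, hET]; ring
  rw [hNval, hCval]
  -- Step 6: arithmetic
  have hh0 : h ≠ 0 := ne_of_gt hh
  have hi0 : (i : ℝ) ≠ 0 := by positivity
  have hfac : ∀ m : ℕ, (m.factorial : ℝ) ≠ 0 := fun m => by
    exact_mod_cast m.factorial_ne_zero
  have hs0 : ((-1 : ℝ)) ^ (ν - i) ≠ 0 := pow_ne_zero _ (by norm_num)
  field_simp
end

section
/- Let ξ ∈ (−1,1), h > 0, and real numbers λ_{j_0}, …, λ_{j_{n−k}} be n−k+1 distinct integers each lying in [k−ν, n−ν], with nodes a_{j_i} = ξ − λ_{j_i} h. Suppose x ∈ [−1,1] with x ≥ ξ and 1 − ξ = (ν+1)h. Then ∏_{i=0}^{n−k}(x − a_{j_i}) ≤ ((n+k+2)/2)^{n−k+1} h^{n−k+1}, provided each factor x − a_{j_i} ≥ 0. -/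
open Finset

/-- Sum of `m` distinct integers each at most `N` is at most
`m*N - m*(m-1)/2` (stated multiplied by 2 to avoid division). -/
lemma sum_distinct_le_aux : ∀ (m : ℕ) (S : Finset ℤ) (N : ℤ), S.card = m →
    (∀ x ∈ S, x ≤ N) → 2 * ∑ x ∈ S, x ≤ (m : ℤ) * (2 * N - m + 1) := by
  intro m
  induction m with
  | zero =>
    intro S N hcard _
    rw [Finset.card_eq_zero] at hcard
    subst hcard; simp
  | succ m ih =>
    intro S N hcard hle
    have hne : S.Nonempty := Finset.card_pos.mp (by omega)
    set M := S.max' hne with hMdef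
    have hM : M ∈ S := S.max'_mem hne
    have h2 : ∀ x ∈ S.erase M, x ≤ M - 1 := by
      intro x hx
      have h1 := S.le_max' x (Finset.mem_of_mem_erase hx)
      have h3 := Finset.ne_of_mem_erase hx
      omega
    have hc : (S.erase M).card = m := by
      rw [Finset.card_erase_of_mem hM, hcard]
      omega
    have hih := ih (S.erase M) (M - 1) hc h2
    have hsum : ∑ x ∈ S, x = M + ∑ x ∈ S.erase M, x :=
      (Finset.add_sum_erase _ _ hM).symm
    have hMN : M ≤ N := hle M hM
    have hm0 : (0 : ℤ) ≤ (m : ℤ) := Int.natCast_nonneg m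
    push_cast
    push_cast at hih
    nlinarith [hih, hMN, hm0]

/-- AM–GM: a product of nonnegative reals whose sum is at most `card * B`
is at most `B ^ card`. -/
lemma prod_le_pow_of_sum_le {ι : Type*} (s : Finset ι) (f : ι → ℝ) (B : ℝ)
    (hf : ∀ i ∈ s, 0 ≤ f i) (hB : 0 ≤ B)
    (hsum : ∑ i ∈ s, f i ≤ s.card * B) :
    ∏ i ∈ s, f i ≤ B ^ s.card := by
  rcases s.eq_empty_or_nonempty with rfl | hne
  · simp
  have hc : (0 : ℝ) < (s.card : ℝ) := Nat.cast_pos.mpr (Finset.card_pos.mpr hne)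
  have key := Real.geom_mean_le_arith_mean s (fun _ => (1 : ℝ)) f
    (fun _ _ => zero_le_one) (by simpa using hc) hf
  simp only [Real.rpow_one, Finset.sum_const, nsmul_eq_mul, mul_one, one_mul] at key
  have hP : (0 : ℝ) ≤ ∏ i ∈ s, f i := Finset.prod_nonneg hf
  have hmean : (∑ i ∈ s, f i) / s.card ≤ B := by
    rw [div_le_iff₀ hc]; linarith [hsum]
  have key2 : (∏ i ∈ s, f i) ^ ((s.card : ℝ))⁻¹ ≤ B := key.trans hmean
  have h3 : ((∏ i ∈ s, f i) ^ ((s.card : ℝ))⁻¹) ^ (s.card : ℝ) ≤ B ^ (s.card : ℝ) :=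
    Real.rpow_le_rpow (Real.rpow_nonneg hP _) key2 (le_of_lt hc)
  rw [← Real.rpow_natCast B s.card]
  calc (∏ i ∈ s, f i)
      = ((∏ i ∈ s, f i) ^ ((s.card : ℝ))⁻¹) ^ (s.card : ℝ) := by
        rw [← Real.rpow_mul hP, inv_mul_cancel₀ (ne_of_gt hc), Real.rpow_one]
    _ ≤ B ^ (s.card : ℝ) := h3

/-- AM–GM product bound for the interpolation error analysis: if
`λ_{j_0},…,λ_{j_{n-k}}` are `n-k+1` distinct integers in `[k-ν, n-ν]`, the
nodes are `a_{j_i} = ξ - λ_{j_i} h`, `x ∈ [-1,1]` with `x ≥ ξ`,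
`1 - ξ = (ν+1)h`, and every factor `x - a_{j_i}` is nonnegative, then
`∏_i (x - a_{j_i}) ≤ ((n+k+2)/2)^{n-k+1} h^{n-k+1}`. -/
theorem prod_nodes_le (n k ν : ℕ) (hkn : k ≤ n) (ξ h : ℝ)
    (hξ : ξ ∈ Set.Ioo (-1 : ℝ) 1) (hh : 0 < h)
    (lam : Fin (n - k + 1) → ℤ) (hinj : Function.Injective lam)
    (hlam : ∀ i, (k : ℤ) - (ν : ℤ) ≤ lam i ∧ lam i ≤ (n : ℤ) - (ν : ℤ))
    (x : ℝ) (hx : x ∈ Set.Icc (-1 : ℝ) 1) (hxξ : ξ ≤ x)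
    (hstep : 1 - ξ = ((ν : ℝ) + 1) * h)
    (hfac : ∀ i, 0 ≤ x - (ξ - (lam i : ℝ) * h)) :
    ∏ i, (x - (ξ - (lam i : ℝ) * h)) ≤
      (((n : ℝ) + (k : ℝ) + 2) / 2) ^ (n - k + 1) * h ^ (n - k + 1) := by
  have hcardS : (Finset.univ.image lam).card = n - k + 1 := by
    rw [Finset.card_image_of_injective _ hinj, Finset.card_univ, Fintype.card_fin]
  have hSle : ∀ y ∈ Finset.univ.image lam, y ≤ (n : ℤ) - (ν : ℤ) := by
    intro y hy
    obtain ⟨i, _, rfl⟩ := Finset.mem_image.mp hy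
    exact (hlam i).2
  have hsumlamZ : 2 * ∑ i, lam i ≤
      ((n - k + 1 : ℕ) : ℤ) * (2 * ((n : ℤ) - ν) - ((n - k + 1 : ℕ) : ℤ) + 1) := by
    have := sum_distinct_le_aux (n - k + 1) (Finset.univ.image lam)
      ((n : ℤ) - ν) hcardS hSle
    rwa [Finset.sum_image (fun a _ b _ hab => hinj hab)] at this
  have hmr : ((n - k + 1 : ℕ) : ℝ) = (n : ℝ) - k + 1 := by
    push_cast [Nat.cast_sub hkn]; ring
  have hmrZ : ((n - k + 1 : ℕ) : ℤ) = (n : ℤ) - k + 1 := by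
    push_cast [Nat.cast_sub hkn]; ring
  have hsumlamR : 2 * ∑ i, (lam i : ℝ) ≤
      ((n : ℝ) - k + 1) * (2 * ((n : ℝ) - ν) - ((n : ℝ) - k + 1) + 1) := by
    rw [hmrZ] at hsumlamZ
    exact_mod_cast hsumlamZ
  have hxle : x - ξ ≤ ((ν : ℝ) + 1) * h := by
    have hx1 : x ≤ 1 := hx.2
    linarith [hstep]
  have hsumf : ∑ i, (x - (ξ - (lam i : ℝ) * h)) ≤
      ((n - k + 1 : ℕ) : ℝ) * ((((n : ℝ) + k + 2) / 2) * h) := by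
    have heach : ∀ i : Fin (n - k + 1),
        x - (ξ - (lam i : ℝ) * h) = (x - ξ) + (lam i : ℝ) * h := fun i => by ring
    have hexp : ∑ i, (x - (ξ - (lam i : ℝ) * h))
        = ((n - k + 1 : ℕ) : ℝ) * (x - ξ) + (∑ i, (lam i : ℝ)) * h := by
      simp_rw [heach]
      rw [Finset.sum_add_distrib, Finset.sum_const, Finset.card_univ,
        Fintype.card_fin, nsmul_eq_mul, Finset.sum_mul]
    rw [hexp, hmr]
    have hmpos : (0 : ℝ) < (n : ℝ) - k + 1 := by
      have : (k : ℝ) ≤ n := Nat.cast_le.mpr hkn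
      linarith
    have h1 : ((n : ℝ) - k + 1) * (x - ξ) ≤ ((n : ℝ) - k + 1) * (((ν : ℝ) + 1) * h) :=
      mul_le_mul_of_nonneg_left hxle (le_of_lt hmpos)
    have h2 : (∑ i, (lam i : ℝ)) * h ≤
        (((n : ℝ) - k + 1) * (2 * ((n : ℝ) - ν) - ((n : ℝ) - k + 1) + 1) / 2) * h := by
      apply mul_le_mul_of_nonneg_right _ (le_of_lt hh)
      linarith [hsumlamR]
    nlinarith [h1, h2]
  have key := prod_le_pow_of_sum_le Finset.univ
    (fun i => x - (ξ - (lam i : ℝ) * h)) ((((n : ℝ) + k + 2) / 2) * h)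
    (fun i _ => hfac i) (by positivity)
    (by simpa [Finset.card_univ] using hsumf)
  simpa [Finset.card_univ, mul_pow] using key
end

section
/- Let g be a function of the form g = log|Ω| where Ω is a nonvanishing smooth function on an open set, and suppose Ω is k-times differentiable at x with Ω(x) ≠ 0. Then Ω^{(k)}(x) = k! · Ω(x) · Z_k(g'(x)/0!, g''(x)/1!, …, g^{(k)}(x)/(k−1)!), i.e., the k-th derivative of exp∘g equals k! exp(g(x)) Z_k(g^{(r)}(x)/(r−1)!), where Z_k is the cycle index of S_k. -/
set_option maxHeartbeats 1000000

open Equiv Equiv.Perm Finset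


open Finset

variable {α : Type*} [Fintype α] [DecidableEq α]

/-- Merging a point `a` into a cycle `c` via a transposition gives a cycle. -/
theorem swap_mul_isCycle {c : Equiv.Perm α} (hc : c.IsCycle) {a b : α}
    (ha : a ∉ c.support) (hb : b ∈ c.support) :
    (swap a b * c).IsCycle ∧ (swap a b * c).support = insert a c.support := by
  have hca : c a = a := Equiv.Perm.notMem_support.mp ha
  have hab : a ≠ b := fun h => ha (h ▸ hb)
  have hcb : c b ≠ b := Equiv.Perm.mem_support.mp hb
  have hcne : ∀ x, x ≠ a → c x ≠ a := by
    intro x hx h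
    exact hx (c.injective (h.trans hca.symm))
  have hda : (swap a b * c) a = b := by
    simp [Equiv.Perm.mul_apply, hca]
  have hsupp : (swap a b * c).support = insert a c.support := by
    ext x
    simp only [Equiv.Perm.mem_support, Finset.mem_insert, Equiv.Perm.mul_apply]
    constructor
    · intro hx
      by_contra h
      push_neg at h
      obtain ⟨hxa, hxs⟩ := h
      rw [hxs] at hx
      have hxb : x ≠ b := fun h' => hcb (h' ▸ hxs)
      exact hx (swap_apply_of_ne_of_ne hxa hxb)
    · rintro (rfl | hxs)
      · rw [hca, swap_apply_left]; exact hab.symm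
      · have hxa : x ≠ a := fun h => ha (h ▸ Equiv.Perm.mem_support.mpr hxs)
        have hcxa : c x ≠ a := hcne x hxa
        rcases eq_or_ne (c x) b with h | h
        · rw [h, swap_apply_right]; exact fun hh => hxa hh.symm
        · rw [swap_apply_of_ne_of_ne hcxa h]
          exact hxs
  refine ⟨⟨a, by rw [hda]; exact hab.symm, ?_⟩, hsupp⟩
  -- every moved point is on the same cycle as `a`
  have key : ∀ k : ℕ, (swap a b * c).SameCycle a ((c ^ k) b) := by
    intro k
    induction k with
    | zero =>
      exact ⟨1, by simpa using hda⟩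
    | succ k ihk =>
      set z := (c ^ k) b with hz
      have hzs : z ∈ c.support := (Equiv.Perm.pow_apply_mem_support).mpr hb
      have hza : z ≠ a := fun h => ha (h ▸ hzs)
      have hcza : c z ≠ a := hcne z hza
      rcases eq_or_ne (c z) b with h | h
      · have : (c ^ (k + 1)) b = b := by
          rw [pow_succ', Equiv.Perm.mul_apply, ← hz]; exact h
        rw [this]
        exact ⟨1, by simpa using hda⟩
      · have hdz : (swap a b * c) z = (c ^ (k + 1)) b := by
          rw [pow_succ', Equiv.Perm.mul_apply, Equiv.Perm.mul_apply, ← hz,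
            swap_apply_of_ne_of_ne hcza h]
        exact ihk.trans ⟨1, by simpa using hdz⟩
  intro y hy
  have hy' : y ∈ (swap a b * c).support := Equiv.Perm.mem_support.mpr hy
  rw [hsupp, Finset.mem_insert] at hy'
  rcases hy' with rfl | hy'
  · exact Equiv.Perm.SameCycle.refl _ _
  · obtain ⟨k, hk⟩ := hc.exists_pow_eq (Equiv.Perm.mem_support.mp hb)
      (Equiv.Perm.mem_support.mp hy')
    exact hk ▸ key k

theorem swap_mul_fixed {f : Perm α} {a b : α} (ha : f a = a) (hb : f b = b)
    (hab : a ≠ b) :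
    (swap a b * f).cycleType = 2 ::ₘ f.cycleType ∧
      (swap a b * f).support = {a, b} ∪ f.support := by
  have hd : (swap a b).Disjoint f := by
    intro x
    rcases eq_or_ne x a with rfl | hxa
    · right; exact ha
    rcases eq_or_ne x b with rfl | hxb
    · right; exact hb
    · left; exact swap_apply_of_ne_of_ne hxa hxb
  have hsw : (swap a b).cycleType = {2} := by
    rw [(isCycle_swap hab).cycleType, support_swap hab]
    simp [hab]
  constructor
  · rw [hd.cycleType_mul, hsw, Multiset.singleton_add]
  · rw [hd.support_mul, support_swap hab]

theorem swap_mul_moved {f : Perm α} {a b : α} (ha : f a = a) (hb : f b ≠ b)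
    (hab : a ≠ b) :
    (swap a b * f).cycleType
        = ((f.cycleOf b).support.card + 1) ::ₘ f.cycleType.erase (f.cycleOf b).support.card ∧
      (swap a b * f).support = insert a f.support ∧
      (f.cycleOf b).support.card ∈ f.cycleType := by
  set c := f.cycleOf b with hc
  have hbs : b ∈ f.support := mem_support.mpr hb
  have hcc : c.IsCycle := isCycle_cycleOf f hb
  have hcf : c ∈ f.cycleFactorsFinset := cycleOf_mem_cycleFactorsFinset_iff.mpr hbs
  have hbc : b ∈ c.support := by
    rw [hc, mem_support_cycleOf_iff]; exact ⟨Equiv.Perm.SameCycle.refl _ _, hbs⟩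
  have has : a ∉ f.support := notMem_support.mpr ha
  have hac : a ∉ c.support := fun h => has (Finset.mem_of_subset (support_cycleOf_le f b) h)
  set r := f * c⁻¹ with hr
  have hagree : ∀ x ∈ c.support, c x = f x := (mem_cycleFactorsFinset_iff.mp hcf).2
  have hcr : c.Disjoint r := by
    intro x
    by_cases hx : x ∈ c.support
    · right
      have hx' : c⁻¹ x ∈ c.support := by
        rw [Equiv.Perm.mem_support] at hx ⊢
        intro h
        have h2 : x = c⁻¹ x := (Equiv.apply_symm_apply c x).symm.trans h
        rw [← h2] at h
        exact hx h
      show f (c⁻¹ x) = x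
      rw [← hagree _ hx']; exact Equiv.apply_symm_apply c x
    · left; exact notMem_support.mp hx
  have hrc : r * c = f := inv_mul_cancel_right f c
  have hfeq : c * r = f := by rw [← hrc]; exact hcr.commute.eq
  have hrt : r.cycleType = f.cycleType - c.cycleType :=
    cycleType_mul_inv_mem_cycleFactorsFinset_eq_sub hcf
  obtain ⟨hcyc, hsup⟩ := swap_mul_isCycle hcc hac hbc
  have hca : c a = a := notMem_support.mp hac
  have har : a ∉ r.support := by
    rw [notMem_support]
    show f (c⁻¹ a) = a
    rw [← hca, show c⁻¹ (c a) = a from Equiv.symm_apply_apply c a, hca, ha]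
  have hsupdisj : _root_.Disjoint (swap a b * c).support r.support := by
    rw [hsup]
    rw [Finset.disjoint_left]
    intro x hx hxr
    rcases Finset.mem_insert.mp hx with rfl | hx'
    · exact har hxr
    · exact Finset.disjoint_left.mp hcr.disjoint_support hx' hxr
  have hdisj2 : (swap a b * c).Disjoint r := disjoint_iff_disjoint_support.mpr hsupdisj
  have hmul : swap a b * f = (swap a b * c) * r := by rw [mul_assoc, hfeq]
  refine ⟨?_, ?_, ?_⟩
  · rw [hmul, hdisj2.cycleType_mul, hcyc.cycleType, hsup, Finset.card_insert_of_notMem hac,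
      hrt, hcc.cycleType]
    simp [Multiset.singleton_add, Multiset.sub_singleton]
  · rw [hmul, hdisj2.support_mul, hsup, ← hfeq, hcr.support_mul, Finset.insert_union]
  · rw [cycleType_def]
    exact Multiset.mem_map.mpr ⟨c, hcf, rfl⟩

theorem card_fiber_cycleOf (h : Perm α) {i : ℕ} (hi : 2 ≤ i) :
    (univ.filter fun b => (h.cycleOf b).support.card = i).card
      = i * Multiset.count i h.cycleType := by
  have hset : (univ.filter fun b => (h.cycleOf b).support.card = i)
      = (h.cycleFactorsFinset.filter fun c => c.support.card = i).biUnion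
          (fun c => c.support) := by
    ext b
    simp only [Finset.mem_filter, Finset.mem_univ, true_and, Finset.mem_biUnion]
    constructor
    · intro hb
      have hbs : b ∈ h.support := by
        by_contra hbs
        have h1 : h.cycleOf b = 1 := (cycleOf_eq_one_iff h).mpr (notMem_support.mp hbs)
        rw [h1] at hb
        simp only [Equiv.Perm.support_one, Finset.card_empty] at hb
        omega
      exact ⟨h.cycleOf b, ⟨cycleOf_mem_cycleFactorsFinset_iff.mpr hbs, hb⟩,
        (mem_support_cycleOf_iff).mpr ⟨Equiv.Perm.SameCycle.refl _ _, hbs⟩⟩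
    · rintro ⟨c, ⟨hcf, hci⟩, hbc⟩
      rw [← cycle_is_cycleOf hbc hcf]
      exact hci
  rw [hset, Finset.card_biUnion]
  · rw [Finset.sum_congr rfl (fun c hc => (Finset.mem_filter.mp hc).2), Finset.sum_const,
      smul_eq_mul, mul_comm]
    congr 1
    rw [cycleType_def, Multiset.count_map]
    have heq : Multiset.filter (fun a => i = (Finset.card ∘ Equiv.Perm.support) a)
        h.cycleFactorsFinset.val
        = Multiset.filter (fun c => c.support.card = i) h.cycleFactorsFinset.val :=
      Multiset.filter_congr (fun x _ => by simp [eq_comm, Function.comp])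
    rw [heq]
    rfl
  · intro c hc d hd hcd
    exact (cycleFactorsFinset_pairwise_disjoint h (Finset.mem_filter.mp hc).1
      (Finset.mem_filter.mp hd).1 hcd).disjoint_support

theorem cycleCount_one_eq {n : ℕ} (σ : Perm (Fin n)) :
    cycleCount 1 σ = n - σ.support.card := by
  rw [cycleCount, if_pos rfl]
  have : (Finset.univ.filter fun a => σ a = a) = σ.supportᶜ := by
    ext a
    simp [Equiv.Perm.mem_support, not_not]
  rw [this, Finset.card_compl, Fintype.card_fin]

theorem cycleCount_of_ne_one {n : ℕ} {i : ℕ} (hi : i ≠ 1) (σ : Perm (Fin n)) :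
    cycleCount i σ = Multiset.count i σ.cycleType := by
  rw [cycleCount, if_neg hi]

theorem cycleCount_eq_zero_of_gt {n : ℕ} {i : ℕ} (hi : n < i) (σ : Perm (Fin n)) :
    cycleCount i σ = 0 := by
  rcases eq_or_ne i 1 with rfl | h1
  · interval_cases n
    rw [cycleCount_one_eq]
    simp
  · rw [cycleCount_of_ne_one h1]
    rw [Multiset.count_eq_zero]
    intro hmem
    have h2 := Equiv.Perm.le_card_support_of_mem_cycleType hmem
    have h3 : σ.support.card ≤ n := le_trans (Finset.card_le_univ _) (by simp)
    omega

def finSuccEquivNeZero (m : ℕ) : Fin m ≃ {x : Fin (m + 1) // x ≠ 0} where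
  toFun q := ⟨q.succ, Fin.succ_ne_zero q⟩
  invFun x := x.1.pred x.2
  left_inv q := by simp
  right_inv x := by simp

def ext1 {m : ℕ} (e : Perm (Fin m)) : Perm (Fin (m + 1)) :=
  e.extendDomain (finSuccEquivNeZero m)

theorem ext1_zero {m : ℕ} (e : Perm (Fin m)) : ext1 e 0 = 0 :=
  e.extendDomain_apply_not_subtype _ (by simp)

theorem ext1_succ {m : ℕ} (e : Perm (Fin m)) (q : Fin m) :
    ext1 e q.succ = (e q).succ := by
  have : (q.succ : Fin (m + 1)) = ((finSuccEquivNeZero m) q : Fin (m + 1)) := rfl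
  rw [ext1, this, e.extendDomain_apply_image (finSuccEquivNeZero m) q]
  rfl

theorem decomposeFin_symm_eq {m : ℕ} (p : Fin (m + 1)) (e : Perm (Fin m)) :
    Equiv.Perm.decomposeFin.symm (p, e) = swap 0 p * ext1 e := by
  ext x
  refine Fin.cases ?_ ?_ x
  · rw [Equiv.Perm.decomposeFin_symm_apply_zero, Equiv.Perm.mul_apply, ext1_zero,
      swap_apply_left]
  · intro q
    rw [Equiv.Perm.decomposeFin_symm_apply_succ, Equiv.Perm.mul_apply, ext1_succ]

theorem cycleType_ext1 {m : ℕ} (e : Perm (Fin m)) : (ext1 e).cycleType = e.cycleType :=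
  cycleType_extendDomain _

theorem card_support_ext1 {m : ℕ} (e : Perm (Fin m)) :
    (ext1 e).support.card = e.support.card := card_support_extend_domain _

theorem card_support_le {n : ℕ} (σ : Perm (Fin n)) : σ.support.card ≤ n := by
  exact le_trans (Finset.card_le_univ _) (by simp)

theorem cycleCount_ext1_one {m : ℕ} (e : Perm (Fin m)) :
    cycleCount 1 (ext1 e) = cycleCount 1 e + 1 := by
  rw [cycleCount_one_eq, cycleCount_one_eq, card_support_ext1]
  have := card_support_le e
  omega

theorem cycleCount_ext1_ne {m : ℕ} {j : ℕ} (hj : j ≠ 1) (e : Perm (Fin m)) :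
    cycleCount j (ext1 e) = cycleCount j e := by
  rw [cycleCount_of_ne_one hj, cycleCount_of_ne_one hj, cycleType_ext1]

theorem walg0 {y : ℕ → ℝ} {m : ℕ} (hm : 1 ≤ m) {c c' : ℕ → ℕ}
    (h1 : c' 1 = c 1 + 1) (hj : ∀ j, j ≠ 1 → c' j = c j) (htop : c (m + 1) = 0) :
    ∏ j ∈ Icc 1 (m + 1), y j ^ c' j = y 1 * ∏ j ∈ Icc 1 m, y j ^ c j := by
  have h1A : (1 : ℕ) ∈ Icc 1 (m + 1) := by simp
  have h1B : (1 : ℕ) ∈ Icc 1 m := by simp [hm]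
  rw [← Finset.mul_prod_erase _ _ h1A, ← Finset.mul_prod_erase _ _ h1B, h1, pow_succ]
  have hprod : ∏ j ∈ (Icc 1 (m + 1)).erase 1, y j ^ c' j
      = ∏ j ∈ (Icc 1 m).erase 1, y j ^ c j := by
    rw [Finset.prod_congr rfl (fun j hjm => by
      rw [hj j (Finset.ne_of_mem_erase hjm)])]
    refine (Finset.prod_subset ?_ ?_).symm
    · intro j hjm
      simp only [Finset.mem_erase, Finset.mem_Icc] at hjm ⊢
      omega
    · intro j hjA hjB
      simp only [Finset.mem_erase, Finset.mem_Icc] at hjA hjB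
      have : j = m + 1 := by omega
      rw [this, htop, pow_zero]
  rw [hprod]
  ring

theorem walg {y : ℕ → ℝ} {m i : ℕ} (h1i : 1 ≤ i) (him : i ≤ m) {c c' : ℕ → ℕ}
    (hci : 1 ≤ c i) (hi : c' i = c i - 1) (hi1 : c' (i + 1) = c (i + 1) + 1)
    (hj : ∀ j, j ≠ i → j ≠ i + 1 → c' j = c j) (htop : c (m + 1) = 0) :
    ∏ j ∈ Icc 1 (m + 1), y j ^ c' j
      = y (i + 1) * y i ^ (c i - 1) * ∏ j ∈ (Icc 1 m).erase i, y j ^ c j := by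
  have hiA : i ∈ Icc 1 (m + 1) := by simp; omega
  have hi1A : i + 1 ∈ (Icc 1 (m + 1)).erase i := by
    simp only [Finset.mem_erase, Finset.mem_Icc]; omega
  have hext : ∏ j ∈ (Icc 1 m).erase i, y j ^ c j
      = ∏ j ∈ (Icc 1 (m + 1)).erase i, y j ^ c j := by
    refine Finset.prod_subset ?_ ?_
    · intro j hjm
      simp only [Finset.mem_erase, Finset.mem_Icc] at hjm ⊢
      omega
    · intro j hjA hjB
      simp only [Finset.mem_erase, Finset.mem_Icc] at hjA hjB
      have : j = m + 1 := by omega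
      rw [this, htop, pow_zero]
  rw [hext, ← Finset.mul_prod_erase _ _ hiA, ← Finset.mul_prod_erase _ _ hi1A,
    ← Finset.mul_prod_erase _ (fun j => y j ^ c j) hi1A, hi, hi1, pow_succ]
  have hprod : ∏ j ∈ ((Icc 1 (m + 1)).erase i).erase (i + 1), y j ^ c' j
      = ∏ j ∈ ((Icc 1 (m + 1)).erase i).erase (i + 1), y j ^ c j := by
    refine Finset.prod_congr rfl (fun j hjm => ?_)
    simp only [Finset.mem_erase] at hjm
    rw [hj j hjm.2.1 hjm.1]
  rw [hprod]
  ring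

theorem weight_swap_fixed {m : ℕ} (hm : 1 ≤ m) (y : ℕ → ℝ) (e : Perm (Fin m))
    {p : Fin (m + 1)} (hp : p ≠ 0) (hfix : ext1 e p = p) :
    ∏ j ∈ Icc 1 (m + 1), y j ^ cycleCount j (swap 0 p * ext1 e)
      = y 2 * y 1 ^ (cycleCount 1 e - 1) * ∏ j ∈ (Icc 1 m).erase 1, y j ^ cycleCount j e := by
  obtain ⟨q, rfl⟩ := Fin.eq_succ_of_ne_zero hp
  have heq : e q = q := by
    have h2 := ext1_succ e q
    rw [hfix] at h2
    exact Fin.succ_inj.mp h2.symm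
  have hq : q ∉ e.support := Equiv.Perm.notMem_support.mpr heq
  have hsuble : e.support.card ≤ m - 1 := by
    have hsub : e.support ⊆ Finset.univ.erase q :=
      fun x hx => Finset.mem_erase.mpr ⟨fun hxq => hq (hxq ▸ hx), Finset.mem_univ x⟩
    calc e.support.card ≤ (Finset.univ.erase q).card := Finset.card_le_card hsub
      _ = m - 1 := by rw [Finset.card_erase_of_mem (Finset.mem_univ q), Finset.card_univ,
            Fintype.card_fin]
  obtain ⟨hct, hsupp⟩ := swap_mul_fixed (ext1_zero e) hfix (Fin.succ_ne_zero q).symm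
  have h0ns : (0 : Fin (m + 1)) ∉ (ext1 e).support := Equiv.Perm.notMem_support.mpr (ext1_zero e)
  have hpns : q.succ ∉ (ext1 e).support := Equiv.Perm.notMem_support.mpr hfix
  have hcard : (swap 0 q.succ * ext1 e).support.card = e.support.card + 2 := by
    rw [hsupp, Finset.card_union_of_disjoint, card_support_ext1]
    · have : ({0, q.succ} : Finset (Fin (m + 1))).card = 2 := by
        rw [Finset.card_insert_of_notMem (by simp [(Fin.succ_ne_zero q).symm]),
          Finset.card_singleton]
      omega
    · rw [Finset.disjoint_left]
      intro x hx
      rcases Finset.mem_insert.mp hx with rfl | hx'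
      · exact h0ns
      · rw [Finset.mem_singleton.mp hx']; exact hpns
  have hcteq : (swap 0 q.succ * ext1 e).cycleType = 2 ::ₘ e.cycleType := by
    rw [hct, cycleType_ext1]
  have hw := walg (y := y) (m := m) (i := 1) (c := fun j => cycleCount j e)
    (c' := fun j => cycleCount j (swap 0 q.succ * ext1 e)) le_rfl hm ?_ ?_ ?_ ?_ ?_
  · exact hw
  · simp only [cycleCount_one_eq]; omega
  · simp only [cycleCount_one_eq, hcard, card_support_ext1]
    have := card_support_le e
    omega
  · simp only [cycleCount_of_ne_one (show (1 + 1 : ℕ) ≠ 1 by norm_num), hcteq,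
      Multiset.count_cons_self]
  · intro j hj1 hj2
    simp only [cycleCount_of_ne_one hj1, hcteq, Multiset.count_cons_of_ne (by omega : j ≠ 2)]
  · exact cycleCount_eq_zero_of_gt (Nat.lt_succ_self m) e

theorem weight_swap_moved {m : ℕ} (y : ℕ → ℝ) (e : Perm (Fin m))
    {p : Fin (m + 1)} (hmove : ext1 e p ≠ p) {i : ℕ}
    (hidef : ((ext1 e).cycleOf p).support.card = i) :
    ∏ j ∈ Icc 1 (m + 1), y j ^ cycleCount j (swap 0 p * ext1 e)
      = y (i + 1) * y i ^ (cycleCount i e - 1)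
        * ∏ j ∈ (Icc 1 m).erase i, y j ^ cycleCount j e := by
  have hp : p ≠ 0 := by
    intro h0
    exact hmove (by rw [h0, ext1_zero])
  obtain ⟨hct, hsupp, hmem⟩ := swap_mul_moved (ext1_zero e) hmove (Ne.symm hp)
  rw [hidef] at hct hmem
  have h2i : 2 ≤ i := Equiv.Perm.two_le_of_mem_cycleType hmem
  have him : i ≤ m := by
    have h1 := Equiv.Perm.le_card_support_of_mem_cycleType hmem
    rw [card_support_ext1] at h1
    exact le_trans h1 (card_support_le e)
  have hmem' : i ∈ e.cycleType := by rw [← cycleType_ext1 e]; exact hmem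
  have h0ns : (0 : Fin (m + 1)) ∉ (ext1 e).support := Equiv.Perm.notMem_support.mpr (ext1_zero e)
  have hcard : (swap 0 p * ext1 e).support.card = e.support.card + 1 := by
    rw [hsupp, Finset.card_insert_of_notMem h0ns, card_support_ext1]
  have hw := walg (y := y) (m := m) (i := i) (c := fun j => cycleCount j e)
    (c' := fun j => cycleCount j (swap 0 p * ext1 e)) (by omega) him ?_ ?_ ?_ ?_ ?_
  · exact hw
  · simp only [cycleCount_of_ne_one (show i ≠ 1 by omega)]
    exact Multiset.one_le_count_iff_mem.mpr hmem'
  · simp only [cycleCount_of_ne_one (show i ≠ 1 by omega), hct,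
      Multiset.count_cons_of_ne (show i ≠ i + 1 by omega), Multiset.count_erase_self,
      cycleType_ext1]
  · simp only [cycleCount_of_ne_one (show i + 1 ≠ 1 by omega), hct,
      Multiset.count_cons_self, Multiset.count_erase_of_ne (show i + 1 ≠ i by omega),
      cycleType_ext1]
  · intro j hji hji1
    rcases eq_or_ne j 1 with rfl | hj1'
    · simp only [cycleCount_one_eq, hcard, card_support_ext1]
      have := card_support_le e
      omega
    · simp only [cycleCount_of_ne_one hj1', hct, Multiset.count_cons_of_ne hji1,
        Multiset.count_erase_of_ne hji, cycleType_ext1]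
  · exact cycleCount_eq_zero_of_gt (Nat.lt_succ_self m) e

theorem rec_sum (m : ℕ) (y : ℕ → ℝ) :
    ∑ σ : Perm (Fin (m + 1)), ∏ i ∈ Icc 1 (m + 1), y i ^ cycleCount i σ
      = y 1 * ∑ e : Perm (Fin m), ∏ i ∈ Icc 1 m, y i ^ cycleCount i e
        + ∑ e : Perm (Fin m), ∑ i ∈ Icc 1 m, (i : ℝ) * (cycleCount i e : ℝ) * y (i + 1)
            * y i ^ (cycleCount i e - 1) * ∏ j ∈ (Icc 1 m).erase i, y j ^ cycleCount j e := by
  rcases Nat.eq_zero_or_pos m with rfl | hm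
  · have h1 : ∀ σ : Perm (Fin 1), ∏ i ∈ Icc 1 1, y i ^ cycleCount i σ = y 1 := by
      intro σ
      rw [Finset.Icc_self, Finset.prod_singleton]
      have hs : cycleCount 1 σ = 1 := by
        rw [cycleCount_one_eq]
        have : σ.support = ∅ := by
          ext a
          simp [Equiv.Perm.mem_support, Subsingleton.elim (σ a) a]
        rw [this]
        simp
      rw [hs, pow_one]
    have h0 : ∀ e : Perm (Fin 0), ∏ i ∈ Icc 1 0, y i ^ cycleCount i e = 1 := by
      intro e; simp
    rw [Finset.sum_congr rfl (fun σ _ => h1 σ), Finset.sum_congr rfl (fun e _ => h0 e)]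
    simp [Finset.sum_const, Fintype.card_perm]
  have key : ∀ e : Perm (Fin m),
      ∑ p : Fin (m + 1), ∏ i ∈ Icc 1 (m + 1), y i ^ cycleCount i (swap 0 p * ext1 e)
        = y 1 * ∏ i ∈ Icc 1 m, y i ^ cycleCount i e
          + ∑ i ∈ Icc 1 m, (i : ℝ) * (cycleCount i e : ℝ) * y (i + 1)
              * y i ^ (cycleCount i e - 1)
              * ∏ j ∈ (Icc 1 m).erase i, y j ^ cycleCount j e := by
    intro e
    have h0 : ext1 e 0 = 0 := ext1_zero e
    rw [← Finset.add_sum_erase _ _ (Finset.mem_univ (0 : Fin (m + 1)))]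
    congr 1
    · -- p = 0 term
      have h1 : swap (0 : Fin (m + 1)) 0 * ext1 e = ext1 e := by
        rw [Equiv.swap_self]
        exact one_mul _
      rw [h1]
      exact walg0 hm (cycleCount_ext1_one e) (fun j hj => cycleCount_ext1_ne hj e)
        (cycleCount_eq_zero_of_gt (Nat.lt_succ_self m) e)
    · -- fiberwise over nonzero p
      have hmap : ∀ p ∈ (Finset.univ : Finset (Fin (m + 1))).erase 0,
          (if ext1 e p = p then 1 else ((ext1 e).cycleOf p).support.card) ∈ Icc 1 m := by
        intro p _
        by_cases hfx : ext1 e p = p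
        · rw [if_pos hfx, Finset.mem_Icc]; omega
        · rw [if_neg hfx, Finset.mem_Icc]
          have h2 : 2 ≤ ((ext1 e).cycleOf p).support.card :=
            Equiv.Perm.two_le_card_support_cycleOf_iff.mpr hfx
          have h3 : ((ext1 e).cycleOf p).support.card ≤ (ext1 e).support.card :=
            Finset.card_le_card (Equiv.Perm.support_cycleOf_le _ _)
          rw [card_support_ext1] at h3
          have := card_support_le e
          omega
      rw [← Finset.sum_fiberwise_of_maps_to hmap
        (fun p => ∏ i ∈ Icc 1 (m + 1), y i ^ cycleCount i (swap 0 p * ext1 e))]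
      refine Finset.sum_congr rfl (fun i hi => ?_)
      obtain ⟨h1i, him⟩ := Finset.mem_Icc.mp hi
      rcases eq_or_ne i 1 with rfl | hi1
      · -- fixed points fiber
        have hfib : ((Finset.univ : Finset (Fin (m + 1))).erase 0).filter
              (fun p => (if ext1 e p = p then 1 else ((ext1 e).cycleOf p).support.card) = 1)
            = (Finset.univ.filter fun a => ext1 e a = a).erase 0 := by
          ext p
          simp only [Finset.mem_filter, Finset.mem_erase, Finset.mem_univ, true_and, and_true]
          constructor
          · rintro ⟨hp0, hgp⟩
            refine ⟨hp0, ?_⟩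
            by_contra hmv
            rw [if_neg hmv] at hgp
            have := Equiv.Perm.two_le_card_support_cycleOf_iff.mpr hmv
            omega
          · rintro ⟨hp0, hfx⟩
            exact ⟨hp0, by rw [if_pos hfx]⟩
        rw [hfib]
        have hcongr : ∀ p ∈ (Finset.univ.filter fun a => ext1 e a = a).erase 0,
            ∏ j ∈ Icc 1 (m + 1), y j ^ cycleCount j (swap 0 p * ext1 e)
              = y 2 * y 1 ^ (cycleCount 1 e - 1)
                * ∏ j ∈ (Icc 1 m).erase 1, y j ^ cycleCount j e := by
          intro p hp
          obtain ⟨hp0, hpf⟩ := Finset.mem_erase.mp hp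
          exact weight_swap_fixed hm y e hp0 (Finset.mem_filter.mp hpf).2
        rw [Finset.sum_congr rfl hcongr, Finset.sum_const, nsmul_eq_mul]
        have hcard : ((Finset.univ.filter fun a => ext1 e a = a).erase 0).card
            = cycleCount 1 e := by
          rw [Finset.card_erase_of_mem (by simp [h0])]
          have hc1 : (Finset.univ.filter fun a => ext1 e a = a).card
              = cycleCount 1 (ext1 e) := by
            rw [cycleCount, if_pos rfl]
          rw [hc1, cycleCount_ext1_one]
          omega
        rw [hcard]
        push_cast
        ring
      · -- moved fiber
        have h2i : 2 ≤ i := by omega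
        have hfib : ((Finset.univ : Finset (Fin (m + 1))).erase 0).filter
              (fun p => (if ext1 e p = p then 1 else ((ext1 e).cycleOf p).support.card) = i)
            = Finset.univ.filter (fun p => ((ext1 e).cycleOf p).support.card = i) := by
          ext p
          simp only [Finset.mem_filter, Finset.mem_erase, Finset.mem_univ, true_and, and_true]
          constructor
          · rintro ⟨hp0, hgp⟩
            by_cases hfx : ext1 e p = p
            · rw [if_pos hfx] at hgp
              exact absurd hgp.symm hi1
            · rwa [if_neg hfx] at hgp
          · intro hv
            have hmv : ext1 e p ≠ p := by
              intro hfx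
              have : (ext1 e).cycleOf p = 1 := (Equiv.Perm.cycleOf_eq_one_iff _).mpr hfx
              rw [this] at hv
              simp only [Equiv.Perm.support_one, Finset.card_empty] at hv
              omega
            have hp0 : p ≠ 0 := by
              intro hp0
              exact hmv (by rw [hp0, h0])
            exact ⟨hp0, by rw [if_neg hmv]; exact hv⟩
        rw [hfib]
        have hcongr : ∀ p ∈ Finset.univ.filter
              (fun p => ((ext1 e).cycleOf p).support.card = i),
            ∏ j ∈ Icc 1 (m + 1), y j ^ cycleCount j (swap 0 p * ext1 e)
              = y (i + 1) * y i ^ (cycleCount i e - 1)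
                * ∏ j ∈ (Icc 1 m).erase i, y j ^ cycleCount j e := by
          intro p hp
          have hv := (Finset.mem_filter.mp hp).2
          have hmv : ext1 e p ≠ p := by
            intro hfx
            have : (ext1 e).cycleOf p = 1 := (Equiv.Perm.cycleOf_eq_one_iff _).mpr hfx
            rw [this] at hv
            simp only [Equiv.Perm.support_one, Finset.card_empty] at hv
            omega
          exact weight_swap_moved y e hmv hv
        rw [Finset.sum_congr rfl hcongr, Finset.sum_const, nsmul_eq_mul,
          card_fiber_cycleOf _ h2i]
        have : Multiset.count i (ext1 e).cycleType = cycleCount i e := by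
          rw [cycleType_ext1, ← cycleCount_of_ne_one hi1]
        rw [this]
        push_cast
        ring
  have hLHS : ∑ σ : Perm (Fin (m + 1)), ∏ i ∈ Icc 1 (m + 1), y i ^ cycleCount i σ
      = ∑ e : Perm (Fin m), ∑ p : Fin (m + 1),
          ∏ i ∈ Icc 1 (m + 1), y i ^ cycleCount i (swap 0 p * ext1 e) := by
    rw [← Equiv.sum_comp (Equiv.Perm.decomposeFin).symm
      (fun σ => ∏ i ∈ Icc 1 (m + 1), y i ^ cycleCount i σ), Fintype.sum_prod_type,
      Finset.sum_comm]
    exact Finset.sum_congr rfl fun e _ => Finset.sum_congr rfl fun p _ => by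
      rw [decomposeFin_symm_eq]
  rw [hLHS, Finset.sum_congr rfl (fun e _ => key e), Finset.sum_add_distrib, Finset.mul_sum]

theorem hasDerivAt_iteratedDeriv_of_contDiffOn {U : Set ℝ} (hU : IsOpen U) {f : ℝ → ℝ}
    {k : ℕ} (hf : ContDiffOn ℝ k f U) {i : ℕ} (hik : i < k) {t : ℝ} (ht : t ∈ U) :
    HasDerivAt (iteratedDeriv i f) (iteratedDeriv (i + 1) f t) t := by
  have hdiff : DifferentiableOn ℝ (iteratedDerivWithin i f U) U :=
    hf.differentiableOn_iteratedDerivWithin (by exact_mod_cast hik) hU.uniqueDiffOn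
  have heqon : ∀ s ∈ U, iteratedDerivWithin i f U s = iteratedDeriv i f s := by
    intro s hs
    rw [iteratedDerivWithin, iteratedDeriv, iteratedFDerivWithin_of_isOpen i hU hs]
  have hdAt : DifferentiableAt ℝ (iteratedDerivWithin i f U) t :=
    (hdiff t ht).differentiableAt (hU.mem_nhds ht)
  have hev : iteratedDerivWithin i f U =ᶠ[nhds t] iteratedDeriv i f :=
    Filter.eventuallyEq_of_mem (hU.mem_nhds ht) heqon
  have hdAt2 : DifferentiableAt ℝ (iteratedDeriv i f) t := hev.differentiableAt_iff.mp hdAt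
  have h := hdAt2.hasDerivAt
  rwa [show iteratedDeriv (i + 1) f t = deriv (iteratedDeriv i f) t by
    rw [iteratedDeriv_succ]]

/-- Faà di Bruno's formula via the cycle index: if `Ω` is `k`-times continuously
differentiable and nonvanishing on an open set `U`, `x ∈ U`, and
`g = log |Ω|`, then `Ω^{(k)}(x) = k! Ω(x) Z_k(g'(x)/0!, g''(x)/1!, …, g^{(k)}(x)/(k-1)!)`. -/
theorem iteratedDeriv_eq_cycleIndex_log (U : Set ℝ) (hU : IsOpen U)
    (Ω : ℝ → ℝ) (hΩ : ∀ y ∈ U, Ω y ≠ 0) (k : ℕ) (hk : ContDiffOn ℝ k Ω U)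
    (x : ℝ) (hx : x ∈ U) :
    iteratedDeriv k Ω x =
      (k.factorial : ℝ) * Ω x *
        cycleIndex k
          (fun r => iteratedDeriv r (fun t => Real.log |Ω t|) x /
            ((r - 1).factorial : ℝ)) := by
  have habs : (fun t : ℝ => Real.log |Ω t|) = fun t => Real.log (Ω t) := by
    funext t; rw [Real.log_abs]
  set g : ℝ → ℝ := fun t => Real.log (Ω t) with hgdef
  have hg : ContDiffOn ℝ k g U := hk.log hΩ
  have main : ∀ m : ℕ, m ≤ k → ∀ t ∈ U, iteratedDeriv m Ω t
      = Ω t * ∑ σ : Perm (Fin m), ∏ i ∈ Icc 1 m,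
          (iteratedDeriv i g t / ((i - 1).factorial : ℝ)) ^ cycleCount i σ := by
    intro m
    induction m with
    | zero =>
      intro _ t ht
      simp [iteratedDeriv_zero]
    | succ m ih =>
      intro hmk t ht
      have hmk' : m ≤ k := Nat.le_of_succ_le hmk
      have hyd : ∀ i ∈ Icc 1 m,
          HasDerivAt (fun s => iteratedDeriv i g s / ((i - 1).factorial : ℝ))
            (iteratedDeriv (i + 1) g t / ((i - 1).factorial : ℝ)) t := by
        intro i hi
        have hik : i < k := by
          have := (Finset.mem_Icc.mp hi).2; omega
        exact (hasDerivAt_iteratedDeriv_of_contDiffOn hU hg hik ht).div_const _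
      have hprod : ∀ σ : Perm (Fin m), HasDerivAt
          (fun s => ∏ i ∈ Icc 1 m,
            (iteratedDeriv i g s / ((i - 1).factorial : ℝ)) ^ cycleCount i σ)
          (∑ i ∈ Icc 1 m, (∏ j ∈ (Icc 1 m).erase i,
              (iteratedDeriv j g t / ((j - 1).factorial : ℝ)) ^ cycleCount j σ)
            * ((cycleCount i σ : ℝ)
              * (iteratedDeriv i g t / ((i - 1).factorial : ℝ)) ^ (cycleCount i σ - 1)
              * (iteratedDeriv (i + 1) g t / ((i - 1).factorial : ℝ)))) t := by
        intro σ
        have h := HasDerivAt.fun_finset_prod (𝕜 := ℝ) (x := t) (u := Icc 1 m)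
          (f := fun i s => (iteratedDeriv i g s / ((i - 1).factorial : ℝ)) ^ cycleCount i σ)
          (f' := fun i => (cycleCount i σ : ℝ)
            * (iteratedDeriv i g t / ((i - 1).factorial : ℝ)) ^ (cycleCount i σ - 1)
            * (iteratedDeriv (i + 1) g t / ((i - 1).factorial : ℝ)))
          (fun i hi => (hyd i hi).pow _)
        simpa [smul_eq_mul] using h
      have hsum : HasDerivAt
          (fun s => ∑ σ : Perm (Fin m), ∏ i ∈ Icc 1 m,
            (iteratedDeriv i g s / ((i - 1).factorial : ℝ)) ^ cycleCount i σ)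
          (∑ σ : Perm (Fin m), ∑ i ∈ Icc 1 m, (∏ j ∈ (Icc 1 m).erase i,
              (iteratedDeriv j g t / ((j - 1).factorial : ℝ)) ^ cycleCount j σ)
            * ((cycleCount i σ : ℝ)
              * (iteratedDeriv i g t / ((i - 1).factorial : ℝ)) ^ (cycleCount i σ - 1)
              * (iteratedDeriv (i + 1) g t / ((i - 1).factorial : ℝ)))) t :=
        HasDerivAt.fun_sum (fun σ _ => hprod σ)
      have hΩd : HasDerivAt Ω (iteratedDeriv 1 Ω t) t := by
        have h := hasDerivAt_iteratedDeriv_of_contDiffOn hU hk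
          (show 0 < k by omega) ht
        simpa [iteratedDeriv_zero] using h
      have hgd : HasDerivAt g (iteratedDeriv 1 Ω t / Ω t) t := hΩd.log (hΩ t ht)
      have hg1 : iteratedDeriv 1 g t = iteratedDeriv 1 Ω t / Ω t := by
        rw [iteratedDeriv_one]; exact hgd.deriv
      have hF := hΩd.fun_mul hsum
      have hev : iteratedDeriv m Ω =ᶠ[nhds t]
          (fun s => Ω s * ∑ σ : Perm (Fin m), ∏ i ∈ Icc 1 m,
            (iteratedDeriv i g s / ((i - 1).factorial : ℝ)) ^ cycleCount i σ) :=
        Filter.eventuallyEq_of_mem (hU.mem_nhds ht) (fun s hs => ih hmk' s hs)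
      have hder : iteratedDeriv (m + 1) Ω t
          = iteratedDeriv 1 Ω t * (∑ σ : Perm (Fin m), ∏ i ∈ Icc 1 m,
              (iteratedDeriv i g t / ((i - 1).factorial : ℝ)) ^ cycleCount i σ)
            + Ω t * ∑ σ : Perm (Fin m), ∑ i ∈ Icc 1 m, (∏ j ∈ (Icc 1 m).erase i,
                (iteratedDeriv j g t / ((j - 1).factorial : ℝ)) ^ cycleCount j σ)
              * ((cycleCount i σ : ℝ)
                * (iteratedDeriv i g t / ((i - 1).factorial : ℝ)) ^ (cycleCount i σ - 1)
                * (iteratedDeriv (i + 1) g t / ((i - 1).factorial : ℝ))) := by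
        rw [iteratedDeriv_succ, hev.deriv_eq, hF.deriv]
      rw [hder, rec_sum m (fun i => iteratedDeriv i g t / ((i - 1).factorial : ℝ))]
      have hΩ1 : iteratedDeriv 1 Ω t
          = Ω t * (iteratedDeriv 1 g t / ((1 - 1).factorial : ℝ)) := by
        rw [hg1]
        field_simp [hΩ t ht]
        simp
      have hDeq : ∀ σ : Perm (Fin m), ∀ i ∈ Icc 1 m,
          (∏ j ∈ (Icc 1 m).erase i,
              (iteratedDeriv j g t / ((j - 1).factorial : ℝ)) ^ cycleCount j σ)
            * ((cycleCount i σ : ℝ)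
              * (iteratedDeriv i g t / ((i - 1).factorial : ℝ)) ^ (cycleCount i σ - 1)
              * (iteratedDeriv (i + 1) g t / ((i - 1).factorial : ℝ)))
          = (i : ℝ) * (cycleCount i σ : ℝ)
              * (iteratedDeriv (i + 1) g t / (((i + 1) - 1).factorial : ℝ))
              * (iteratedDeriv i g t / ((i - 1).factorial : ℝ)) ^ (cycleCount i σ - 1)
              * ∏ j ∈ (Icc 1 m).erase i,
                  (iteratedDeriv j g t / ((j - 1).factorial : ℝ)) ^ cycleCount j σ := by
        intro σ i hi
        obtain ⟨j, rfl⟩ : ∃ j, i = j + 1 := ⟨i - 1, by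
          have := (Finset.mem_Icc.mp hi).1; omega⟩
        have hfac : (iteratedDeriv (j + 1 + 1) g t / (((j + 1) - 1).factorial : ℝ))
            = ((j + 1 : ℕ) : ℝ)
              * (iteratedDeriv (j + 1 + 1) g t / (((j + 1 + 1) - 1).factorial : ℝ)) := by
          simp only [Nat.add_sub_cancel]
          rw [Nat.factorial_succ]
          have hne : ((j.factorial : ℝ)) ≠ 0 := Nat.cast_ne_zero.mpr j.factorial_ne_zero
          push_cast
          field_simp
        rw [hfac]
        ring
      have hsc : ∑ σ : Perm (Fin m), ∑ i ∈ Icc 1 m, (∏ j ∈ (Icc 1 m).erase i,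
              (iteratedDeriv j g t / ((j - 1).factorial : ℝ)) ^ cycleCount j σ)
            * ((cycleCount i σ : ℝ)
              * (iteratedDeriv i g t / ((i - 1).factorial : ℝ)) ^ (cycleCount i σ - 1)
              * (iteratedDeriv (i + 1) g t / ((i - 1).factorial : ℝ)))
          = ∑ σ : Perm (Fin m), ∑ i ∈ Icc 1 m, (i : ℝ) * (cycleCount i σ : ℝ)
              * (iteratedDeriv (i + 1) g t / (((i + 1) - 1).factorial : ℝ))
              * (iteratedDeriv i g t / ((i - 1).factorial : ℝ)) ^ (cycleCount i σ - 1)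
              * ∏ j ∈ (Icc 1 m).erase i,
                  (iteratedDeriv j g t / ((j - 1).factorial : ℝ)) ^ cycleCount j σ :=
        Finset.sum_congr rfl fun σ _ => Finset.sum_congr rfl fun i hi => hDeq σ i hi
      rw [hsc, hΩ1]
      ring
  have hmain := main k le_rfl x hx
  simp only [habs]
  rw [hmain, cycleIndex]
  have hne : ((k.factorial : ℝ)) ≠ 0 := Nat.cast_ne_zero.mpr k.factorial_ne_zero
  field_simp
end
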